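/- arXiv:0812.5039 — 7 statements merged into one kernel-verified Lean document; each statement's English description precedes it below -/
import Mathlib

section
/- Let d ≥ 1 be an integer, let S ⊆ [0,1]^d be a stair-convex set, and let v be a real number with 0 < v ≤ 1/e (where e = 2.71828… is Euler's number). If every closed axis-parallel box B ⊆ S has Lebesgue measure vol(B) ≤ v, then vol(S) ≤ e · v · (ln(1/v))^{d−1}. -/
noncomputable def stairPath : (d : ℕ) → (Fin d → ℝ) → (Fin d → ℝ) → Set (Fin d → ℝ)
  | 0, _, _ => Set.univ
  | (d+1), a, b =>
    if a (Fin.last d) ≤ b (Fin.last d) then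
      segment ℝ a (Fin.snoc (Fin.init a) (b (Fin.last d))) ∪
        (fun z => Fin.snoc z (b (Fin.last d))) '' stairPath d (Fin.init a) (Fin.init b)
    else
      segment ℝ b (Fin.snoc (Fin.init b) (a (Fin.last d))) ∪
        (fun z => Fin.snoc z (a (Fin.last d))) '' stairPath d (Fin.init b) (Fin.init a)

def StairConvex {d : ℕ} (S : Set (Fin d → ℝ)) : Prop :=
  ∀ a ∈ S, ∀ b ∈ S, stairPath d a b ⊆ S

namespace SCproof

open MeasureTheory Set

/-! ### Combinatorial lemmas about stair paths and slices -/

lemma stairPath_succ {d : ℕ} (a b : Fin (d+1) → ℝ) (h : a (Fin.last d) ≤ b (Fin.last d)) :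
    stairPath (d+1) a b = segment ℝ a (Fin.snoc (Fin.init a) (b (Fin.last d))) ∪
      (fun z => Fin.snoc z (b (Fin.last d))) '' stairPath d (Fin.init a) (Fin.init b) := by
  rw [stairPath, if_pos h]

def Slice {d : ℕ} (S : Set (Fin (d+1) → ℝ)) (t : ℝ) : Set (Fin d → ℝ) :=
  {x | Fin.snoc x t ∈ S}

variable {d : ℕ} {S : Set (Fin (d+1) → ℝ)}

lemma snoc_mem_segment {x : Fin d → ℝ} {s r u : ℝ} (hsr : s ≤ r) (hru : r ≤ u) :
    (Fin.snoc x r : Fin (d+1) → ℝ) ∈ segment ℝ (Fin.snoc x s : Fin (d+1) → ℝ) (Fin.snoc x u) := by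
  rcases eq_or_lt_of_le (hsr.trans hru) with h | h
  · have hrs : r = s := le_antisymm (h ▸ hru) hsr
    subst hrs; exact left_mem_segment ℝ _ _
  · have hus : u - s ≠ 0 := sub_ne_zero.mpr h.ne'
    refine ⟨(u - r)/(u - s), (r - s)/(u - s),
      div_nonneg (sub_nonneg.mpr hru) (sub_nonneg.mpr h.le),
      div_nonneg (sub_nonneg.mpr hsr) (sub_nonneg.mpr h.le),
      by field_simp; ring, ?_⟩
    funext i
    simp only [Pi.add_apply, Pi.smul_apply, smul_eq_mul]
    refine Fin.lastCases ?_ (fun j => ?_) i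
    · simp only [Fin.snoc_last]
      field_simp
      ring
    · simp only [Fin.snoc_castSucc]
      field_simp
      ring

lemma mem_slice_of_le (hsc : StairConvex S) {x y : Fin d → ℝ} {s t : ℝ}
    (hx : x ∈ Slice S s) (hy : y ∈ Slice S t) (hst : s ≤ t) : x ∈ Slice S t := by
  have h := hsc _ hx _ hy
  rw [stairPath_succ] at h
  · have := h (Or.inl (right_mem_segment ℝ _ _))
    simpa [Slice, Fin.init_snoc, Fin.snoc_last] using this
  · simpa [Fin.snoc_last] using hst

lemma mem_slice_between (hsc : StairConvex S) {x : Fin d → ℝ} {s r u : ℝ}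
    (hxs : x ∈ Slice S s) (hxu : x ∈ Slice S u) (hsr : s ≤ r) (hru : r ≤ u) :
    x ∈ Slice S r := by
  have h := hsc _ hxs _ hxu
  rw [stairPath_succ] at h
  · refine h (Or.inl ?_)
    have := snoc_mem_segment (x := x) hsr hru
    simpa [Fin.init_snoc, Fin.snoc_last] using this
  · simpa [Fin.snoc_last] using hsr.trans hru

lemma slice_stairConvex (hsc : StairConvex S) (t : ℝ) : StairConvex (Slice S t) := by
  intro a ha b hb w hw
  have h := hsc _ ha _ hb
  rw [stairPath_succ] at h
  · refine h (Or.inr ?_)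
    rw [Fin.snoc_last, Fin.init_snoc, Fin.init_snoc]
    exact ⟨w, hw, rfl⟩
  · simp [Fin.snoc_last]

/-! ### Analytic lemmas -/

lemma sub_one_le_mul_log {y : ℝ} (hy : 1 ≤ y) : y - 1 ≤ y * Real.log y := by
  have hy0 : 0 < y := lt_of_lt_of_le one_pos hy
  have h := Real.log_le_sub_one_of_pos (x := 1/y) (by positivity)
  rw [one_div, Real.log_inv] at h
  have h2 := mul_le_mul_of_nonneg_left h hy0.le
  have h3 : y * (1/y) = 1 := by field_simp
  rw [one_div] at h3
  nlinarith

lemma psi_ge_one (k : ℕ) {y : ℝ} (h1 : 1 ≤ y) (hk : y ≤ k) :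
    1 ≤ Real.exp (1 - y) * y ^ k := by
  have hy0 : 0 < y := lt_of_lt_of_le one_pos h1
  have hlog : 0 ≤ Real.log y := Real.log_nonneg h1
  have h2 : y - 1 ≤ (k : ℝ) * Real.log y := by
    refine le_trans (sub_one_le_mul_log h1) ?_
    exact mul_le_mul_of_nonneg_right hk hlog
  have h3 : Real.exp (y - 1) ≤ y ^ k := by
    calc Real.exp (y - 1) ≤ Real.exp ((k : ℝ) * Real.log y) := Real.exp_le_exp.mpr h2
    _ = y ^ k := by rw [← Real.log_pow, Real.exp_log (by positivity)]
  have hmul : Real.exp (1 - y) * Real.exp (y - 1) = 1 := by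
    rw [← Real.exp_add]; norm_num
  have h4 := mul_le_mul_of_nonneg_left h3 (Real.exp_pos (1 - y)).le
  rw [hmul] at h4; exact h4

lemma psi_anti (k : ℕ) {y1 y2 : ℝ} (h0 : 0 < y1) (hk : (k : ℝ) ≤ y1) (h12 : y1 ≤ y2) :
    Real.exp (1 - y2) * y2 ^ k ≤ Real.exp (1 - y1) * y1 ^ k := by
  have hy2 : 0 < y2 := lt_of_lt_of_le h0 h12
  have hlog : Real.log (y2 / y1) ≤ y2 / y1 - 1 := Real.log_le_sub_one_of_pos (by positivity)
  have h1 : (k : ℝ) * Real.log (y2 / y1) ≤ y2 - y1 := by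
    have hge : (0:ℝ) ≤ y2 / y1 - 1 := by
      rw [sub_nonneg]; exact (one_le_div h0).mpr h12
    have h2 : (k : ℝ) * Real.log (y2 / y1) ≤ (k : ℝ) * (y2 / y1 - 1) :=
      mul_le_mul_of_nonneg_left hlog (Nat.cast_nonneg k)
    have h3 : (k : ℝ) * (y2 / y1 - 1) ≤ y1 * (y2 / y1 - 1) :=
      mul_le_mul_of_nonneg_right hk hge
    have h4 : y1 * (y2 / y1 - 1) = y2 - y1 := by field_simp
    linarith
  have h5 : y2 ^ k ≤ Real.exp (y2 - y1) * y1 ^ k := by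
    have hq : (y2 / y1) ^ k ≤ Real.exp (y2 - y1) := by
      rw [← Real.exp_log (show (0:ℝ) < (y2 / y1) ^ k by positivity)]
      refine Real.exp_le_exp.mpr ?_
      rw [Real.log_pow]; exact h1
    calc y2 ^ k = (y2 / y1) ^ k * y1 ^ k := by
          rw [← mul_pow]; field_simp
    _ ≤ Real.exp (y2 - y1) * y1 ^ k := mul_le_mul_of_nonneg_right hq (by positivity)
  calc Real.exp (1 - y2) * y2 ^ k
      ≤ Real.exp (1 - y2) * (Real.exp (y2 - y1) * y1 ^ k) :=
        mul_le_mul_of_nonneg_left h5 (Real.exp_pos _).le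
  _ = Real.exp (1 - y1) * y1 ^ k := by
        rw [← mul_assoc, ← Real.exp_add]; ring_nf

/-- The slice bound function (as a function of the distance `u = T - t` to the top). -/
noncomputable def Gfun (k : ℕ) (v : ℝ) (u : ℝ) : ℝ :=
  if Real.exp 1 * v ≤ u then
    min 1 (Real.exp 1 * v / u * Real.log (u / v) ^ k) else 1

lemma Gfun_le_one (k : ℕ) (v u : ℝ) : Gfun k v u ≤ 1 := by
  unfold Gfun; split
  · exact min_le_left _ _
  · exact le_refl 1

lemma Gfun_nonneg (k : ℕ) {v : ℝ} (hv : 0 < v) (u : ℝ) : 0 ≤ Gfun k v u := by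
  unfold Gfun; split
  · rename_i h
    have hu : 0 < u := lt_of_lt_of_le (by positivity) h
    have h1 : (1:ℝ) ≤ Real.log (u / v) := by
      rw [← Real.log_exp 1]
      refine Real.log_le_log (Real.exp_pos 1) ?_
      rw [le_div_iff₀ hv]; exact h
    have : (0:ℝ) ≤ Real.exp 1 * v / u * Real.log (u / v) ^ k := by positivity
    exact le_min zero_le_one this
  · norm_num

lemma Gfun_eq_psi (k : ℕ) {v u : ℝ} (hv : 0 < v) (hu : Real.exp 1 * v ≤ u) :
    Real.exp 1 * v / u * Real.log (u / v) ^ k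
      = Real.exp (1 - Real.log (u / v)) * Real.log (u / v) ^ k := by
  have hu0 : 0 < u := lt_of_lt_of_le (by positivity) hu
  rw [Real.exp_sub, Real.exp_log (by positivity)]
  field_simp

lemma Gfun_anti (k : ℕ) {v : ℝ} (hv : 0 < v) : Antitone (Gfun k v) := by
  intro u1 u2 h12
  unfold Gfun
  by_cases h1 : Real.exp 1 * v ≤ u1
  · have h2 : Real.exp 1 * v ≤ u2 := h1.trans h12
    rw [if_pos h1, if_pos h2]
    have hu1 : 0 < u1 := lt_of_lt_of_le (by positivity) h1
    have hu2 : 0 < u2 := lt_of_lt_of_le (by positivity) h2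
    set y1 := Real.log (u1 / v) with hy1
    set y2 := Real.log (u2 / v) with hy2
    have hy1ge : (1:ℝ) ≤ y1 := by
      rw [hy1, ← Real.log_exp 1]
      refine Real.log_le_log (Real.exp_pos 1) ?_
      rw [le_div_iff₀ hv]; exact h1
    have hyy : y1 ≤ y2 :=
      Real.log_le_log (by positivity) (by gcongr)
    rw [Gfun_eq_psi k hv h1, Gfun_eq_psi k hv h2]
    by_cases hky : y1 ≤ (k : ℝ)
    · have := psi_ge_one k hy1ge hky
      calc min 1 (Real.exp (1 - y2) * y2 ^ k) ≤ 1 := min_le_left _ _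
      _ ≤ min 1 (Real.exp (1 - y1) * y1 ^ k) := le_min (le_refl 1) this
    · push_neg at hky
      exact min_le_min (le_refl 1) (psi_anti k (by linarith) hky.le hyy)
  · rw [if_neg h1]
    split
    · exact (min_le_left _ _)
    · exact le_refl 1

lemma phi_contOn (k : ℕ) {v T : ℝ} (hv : 0 < v) (hT : Real.exp 1 * v ≤ T) :
    ContinuousOn (fun t => Real.exp 1 * v / (T - t) * Real.log ((T - t) / v) ^ k)
      (Set.uIcc 0 (T - Real.exp 1 * v)) := by
  have hEv : 0 < Real.exp 1 * v := by positivity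
  have hsub : ∀ t ∈ Set.uIcc (0:ℝ) (T - Real.exp 1 * v), Real.exp 1 * v ≤ T - t := by
    intro t ht
    rw [Set.uIcc_of_le (by linarith)] at ht
    obtain ⟨h1, h2⟩ := ht
    linarith
  have hne : ∀ t ∈ Set.uIcc (0:ℝ) (T - Real.exp 1 * v), T - t ≠ 0 := by
    intro t ht; exact ne_of_gt (lt_of_lt_of_le hEv (hsub t ht))
  refine ContinuousOn.mul ?_ (ContinuousOn.pow ?_ k)
  · exact continuousOn_const.div (by fun_prop) hne
  · refine Real.continuousOn_log.comp (by fun_prop) ?_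
    intro t ht
    have := hsub t ht
    simp only [Set.mem_compl_iff, Set.mem_singleton_iff]
    exact ne_of_gt (div_pos (lt_of_lt_of_le hEv this) hv)

lemma integral_phi (k : ℕ) {v T : ℝ} (hv : 0 < v) (hT : Real.exp 1 * v ≤ T) :
    ∫ t in (0:ℝ)..(T - Real.exp 1 * v),
        Real.exp 1 * v / (T - t) * Real.log ((T - t) / v) ^ k
      = Real.exp 1 * v / (k + 1) * (Real.log (T / v) ^ (k + 1) - 1) := by
  have hEv : 0 < Real.exp 1 * v := by positivity
  set F : ℝ → ℝ := fun t => -(Real.exp 1 * v / (k + 1)) * Real.log ((T - t) / v) ^ (k + 1)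
    with hF
  have hderiv : ∀ t ∈ Set.uIcc (0:ℝ) (T - Real.exp 1 * v),
      HasDerivAt F (Real.exp 1 * v / (T - t) * Real.log ((T - t) / v) ^ k) t := by
    intro t ht
    rw [Set.uIcc_of_le (by linarith)] at ht
    have hTt : Real.exp 1 * v ≤ T - t := by obtain ⟨h1, h2⟩ := ht; linarith
    have hTt0 : 0 < T - t := lt_of_lt_of_le hEv hTt
    have hu : HasDerivAt (fun t => (T - t) / v) (-1 / v) t := by
      have : HasDerivAt (fun t : ℝ => T - t) (-1) t := (hasDerivAt_id t).const_sub T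
      simpa [div_eq_mul_inv] using this.div_const v
    have hlog : HasDerivAt (fun t => Real.log ((T - t) / v)) ((-1 / v) / ((T - t) / v)) t :=
      hu.log (by positivity)
    have hpow := (hlog.pow (k + 1)).const_mul (-(Real.exp 1 * v / (k + 1)))
    convert hpow using 1
    have hk : ((k:ℝ) + 1) ≠ 0 := by positivity
    all_goals first | rfl | (field_simp; simp only [Nat.add_sub_cancel]; push_cast; ring)
  have hint : IntervalIntegrable
      (fun t => Real.exp 1 * v / (T - t) * Real.log ((T - t) / v) ^ k)
      volume 0 (T - Real.exp 1 * v) :=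
    (phi_contOn k hv hT).intervalIntegrable
  rw [intervalIntegral.integral_eq_sub_of_hasDerivAt hderiv hint]
  have h1 : T - (T - Real.exp 1 * v) = Real.exp 1 * v := by ring
  rw [hF]
  simp only [h1]
  have h2 : Real.exp 1 * v / v = Real.exp 1 := by field_simp
  rw [h2, Real.log_exp]
  ring

lemma integral_G_le (k : ℕ) {v T : ℝ} (hv : 0 < v) (hT0 : 0 ≤ T) (hT1 : T ≤ 1)
    (hv1 : v ≤ 1 / Real.exp 1) :
    ∫ t in (0:ℝ)..T, Gfun k v (T - t)
      ≤ Real.exp 1 * v * Real.log (1 / v) ^ (k + 1) := by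
  have hEv : 0 < Real.exp 1 * v := by positivity
  have hev1 : v * Real.exp 1 ≤ 1 := (le_div_iff₀ (Real.exp_pos 1)).mp hv1
  have hX : (1:ℝ) ≤ Real.log (1 / v) := by
    have h := Real.log_le_log (Real.exp_pos 1)
      ((le_div_iff₀ hv).mpr (by linarith : Real.exp 1 * v ≤ 1))
    rwa [Real.log_exp] at h
  have hXpow : (1:ℝ) ≤ Real.log (1 / v) ^ (k + 1) := one_le_pow₀ hX
  have hmono : Monotone (fun t => Gfun k v (T - t)) := by
    intro t1 t2 h
    exact Gfun_anti k hv (by linarith : T - t2 ≤ T - t1)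
  rcases le_or_gt T (Real.exp 1 * v) with hc | hc
  · calc ∫ t in (0:ℝ)..T, Gfun k v (T - t) ≤ ∫ _t in (0:ℝ)..T, (1:ℝ) := by
          refine intervalIntegral.integral_mono_on hT0 hmono.intervalIntegrable
            intervalIntegrable_const ?_
          intro t _; exact Gfun_le_one k v _
    _ = T := by simp
    _ ≤ Real.exp 1 * v := hc
    _ ≤ Real.exp 1 * v * Real.log (1 / v) ^ (k + 1) := by nlinarith
  · have hsplit : ∫ t in (0:ℝ)..T, Gfun k v (T - t)
        = (∫ t in (0:ℝ)..(T - Real.exp 1 * v), Gfun k v (T - t))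
          + ∫ t in (T - Real.exp 1 * v)..T, Gfun k v (T - t) := by
      rw [intervalIntegral.integral_add_adjacent_intervals
        hmono.intervalIntegrable hmono.intervalIntegrable]
    have hb1 : (∫ t in (0:ℝ)..(T - Real.exp 1 * v), Gfun k v (T - t))
        ≤ Real.exp 1 * v / (k + 1) * (Real.log (T / v) ^ (k + 1) - 1) := by
      rw [← integral_phi k hv hc.le]
      refine intervalIntegral.integral_mono_on (by linarith) hmono.intervalIntegrable
        (phi_contOn k hv hc.le).intervalIntegrable ?_
      intro t ht
      obtain ⟨h1, h2⟩ := ht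
      have hTt : Real.exp 1 * v ≤ T - t := by linarith
      rw [Gfun, if_pos hTt]
      exact min_le_right _ _
    have hb2 : (∫ t in (T - Real.exp 1 * v)..T, Gfun k v (T - t)) ≤ Real.exp 1 * v := by
      calc (∫ t in (T - Real.exp 1 * v)..T, Gfun k v (T - t))
          ≤ ∫ _t in (T - Real.exp 1 * v)..T, (1:ℝ) := by
            refine intervalIntegral.integral_mono_on (by linarith) hmono.intervalIntegrable
              intervalIntegrable_const ?_
            intro t _; exact Gfun_le_one k v _
      _ = Real.exp 1 * v := by simp
    have hY1 : (1:ℝ) ≤ Real.log (T / v) := by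
      have h := Real.log_le_log (Real.exp_pos 1)
        ((le_div_iff₀ hv).mpr (by linarith : Real.exp 1 * v ≤ T))
      rwa [Real.log_exp] at h
    have hYX : Real.log (T / v) ≤ Real.log (1 / v) :=
      Real.log_le_log (div_pos (by linarith) hv) (by gcongr)
    have hYpow : Real.log (T / v) ^ (k + 1) ≤ Real.log (1 / v) ^ (k + 1) :=
      pow_le_pow_left₀ (by linarith) hYX _
    have hYpow1 : (1:ℝ) ≤ Real.log (T / v) ^ (k + 1) := one_le_pow₀ hY1
    have hdiv : Real.exp 1 * v / (k + 1) ≤ Real.exp 1 * v := by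
      refine div_le_self hEv.le ?_
      have : (0:ℝ) ≤ (k:ℝ) := Nat.cast_nonneg k
      linarith
    have hdiv0 : 0 < Real.exp 1 * v / ((k:ℝ) + 1) := div_pos hEv (by positivity)
    rw [hsplit]
    nlinarith [hb1, hb2, hYpow, hYpow1, hdiv, hdiv0, hXpow]

lemma sum_G_le (g : ℝ → ℝ) (hmono : Monotone g) (hg1 : ∀ t, g t ≤ 1) (hg0 : ∀ t, 0 ≤ g t)
    {T : ℝ} (hT : 0 < T) (n : ℕ) (hn : 1 ≤ n) :
    ∑ i ∈ Finset.range n, (T / n) * g (((i : ℝ) + 1) * (T / n))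
      ≤ (∫ t in (0:ℝ)..T, g t) + T / n := by
  set Δ := T / n with hΔdef
  have hn0 : (0:ℝ) < n := by exact_mod_cast Nat.pos_of_ne_zero (by omega)
  have hΔ : 0 < Δ := by positivity
  have hnΔ : (n : ℝ) * Δ = T := by rw [hΔdef]; field_simp
  have hstep : ∀ i : ℕ, Δ * g (((i:ℝ) + 1) * Δ)
      ≤ ∫ t in (((i:ℝ) + 1) * Δ)..(((i:ℝ) + 2) * Δ), g t := by
    intro i
    have hle : ((i:ℝ) + 1) * Δ ≤ ((i:ℝ) + 2) * Δ := by nlinarith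
    have hconst : Δ * g (((i:ℝ) + 1) * Δ)
        = ∫ _t in (((i:ℝ) + 1) * Δ)..(((i:ℝ) + 2) * Δ), g (((i:ℝ) + 1) * Δ) := by
      rw [intervalIntegral.integral_const, smul_eq_mul]
      ring_nf
    rw [hconst]
    refine intervalIntegral.integral_mono_on hle intervalIntegrable_const
      hmono.intervalIntegrable ?_
    intro t ht; exact hmono ht.1
  have hsum : ∑ i ∈ Finset.range n, (∫ t in (((i:ℝ) + 1) * Δ)..(((i:ℝ) + 2) * Δ), g t)
      = ∫ t in Δ..(((n:ℝ) + 1) * Δ), g t := by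
    have := intervalIntegral.sum_integral_adjacent_intervals
      (a := fun i : ℕ => ((i : ℝ) + 1) * Δ) (μ := volume) (f := g) (n := n)
      (fun i _ => hmono.intervalIntegrable)
    convert this using 2 <;> push_cast <;> ring
  calc ∑ i ∈ Finset.range n, Δ * g (((i:ℝ) + 1) * Δ)
      ≤ ∑ i ∈ Finset.range n, ∫ t in (((i:ℝ) + 1) * Δ)..(((i:ℝ) + 2) * Δ), g t :=
        Finset.sum_le_sum fun i _ => hstep i
    _ = ∫ t in Δ..(((n:ℝ) + 1) * Δ), g t := hsum
    _ = (∫ t in Δ..T, g t) + ∫ t in T..(((n:ℝ) + 1) * Δ), g t := by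
        rw [intervalIntegral.integral_add_adjacent_intervals
          hmono.intervalIntegrable hmono.intervalIntegrable]
    _ ≤ (∫ t in (0:ℝ)..T, g t) + Δ := by
        have h1 : (∫ t in (0:ℝ)..T, g t) = (∫ t in (0:ℝ)..Δ, g t) + ∫ t in Δ..T, g t := by
          rw [intervalIntegral.integral_add_adjacent_intervals
            hmono.intervalIntegrable hmono.intervalIntegrable]
        have h2 : (0:ℝ) ≤ ∫ t in (0:ℝ)..Δ, g t :=
          intervalIntegral.integral_nonneg hΔ.le (fun t _ => hg0 t)
        have h3 : (∫ t in T..(((n:ℝ) + 1) * Δ), g t) ≤ Δ := by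
          have hTn : T ≤ ((n:ℝ) + 1) * Δ := by nlinarith
          calc (∫ t in T..(((n:ℝ) + 1) * Δ), g t)
              ≤ ∫ _t in T..(((n:ℝ) + 1) * Δ), (1:ℝ) :=
                intervalIntegral.integral_mono_on hTn hmono.intervalIntegrable
                  intervalIntegrable_const (fun t _ => hg1 t)
          _ = ((n:ℝ) + 1) * Δ - T := by simp
          _ = Δ := by rw [← hnΔ]; ring
        linarith

/-! ### Measure-theoretic facts -/

lemma volume_cube (d : ℕ) : volume (Set.Icc (0 : Fin d → ℝ) 1) = 1 := by
  rw [Real.volume_Icc_pi]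
  simp

lemma volume_preimage_prod {d : ℕ} (A : Set ℝ) (B : Set (Fin d → ℝ))
    (hA : MeasurableSet A) (hB : MeasurableSet B) :
    volume ((MeasurableEquiv.piFinSuccAbove (fun _ : Fin (d+1) => ℝ) (Fin.last d)) ⁻¹' (A ×ˢ B))
      = volume A * volume B := by
  rw [(volume_preserving_piFinSuccAbove (fun _ : Fin (d+1) => ℝ) (Fin.last d)).measure_preimage
    (hA.prod hB).nullMeasurableSet]
  rw [MeasureTheory.Measure.volume_eq_prod _ _, Measure.prod_prod]

lemma piFinSuccAbove_last_apply {d : ℕ} (y : Fin (d+1) → ℝ) :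
    (MeasurableEquiv.piFinSuccAbove (fun _ : Fin (d+1) => ℝ) (Fin.last d)) y
      = (y (Fin.last d), Fin.init y) := by
  simp [MeasurableEquiv.piFinSuccAbove_apply]

lemma volume_snoc_Icc {d : ℕ} (a b : Fin d → ℝ) (s t : ℝ) :
    volume (Set.Icc (Fin.snoc a s : Fin (d+1) → ℝ) (Fin.snoc b t))
      = (∏ i : Fin d, ENNReal.ofReal (b i - a i)) * ENNReal.ofReal (t - s) := by
  rw [Real.volume_Icc_pi, Fin.prod_univ_castSucc]
  simp [Fin.snoc_castSucc, Fin.snoc_last]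

/-! ### The main induction -/

theorem main : ∀ d : ℕ, 1 ≤ d → ∀ S : Set (Fin d → ℝ), S ⊆ Set.Icc 0 1 → StairConvex S →
    ∀ v : ℝ, 0 < v → v ≤ 1 / Real.exp 1 →
    (∀ a b : Fin d → ℝ, a ≤ b → Set.Icc a b ⊆ S →
      MeasureTheory.volume (Set.Icc a b) ≤ ENNReal.ofReal v) →
    MeasureTheory.volume S ≤
      ENNReal.ofReal (Real.exp 1 * v * (Real.log (1 / v)) ^ (d - 1)) := by
  intro d hd
  induction d, hd using Nat.le_induction with
  | base =>
    intro S hS hsc v hv0 hv1 hbox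
    have hi : ∀ i : Fin 1, i = Fin.last 0 := fun i => Fin.ext (by omega)
    have hseg : ∀ a b : Fin 1 → ℝ, a (Fin.last 0) ≤ b (Fin.last 0) →
        Set.Icc a b ⊆ segment ℝ a b := by
      intro a b hab x hx
      rw [Set.mem_Icc] at hx
      have h1 : a (Fin.last 0) ≤ x (Fin.last 0) := hx.1 _
      have h2 : x (Fin.last 0) ≤ b (Fin.last 0) := hx.2 _
      have hmem := snoc_mem_segment (x := Fin.init a) h1 h2
      have e1 : (Fin.snoc (Fin.init a) (x (Fin.last 0)) : Fin 1 → ℝ) = x := by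
        rw [Subsingleton.elim (Fin.init a) (Fin.init x)]; exact Fin.snoc_init_self x
      have e2 : (Fin.snoc (Fin.init a) (a (Fin.last 0)) : Fin 1 → ℝ) = a := Fin.snoc_init_self a
      have e3 : (Fin.snoc (Fin.init a) (b (Fin.last 0)) : Fin 1 → ℝ) = b := by
        rw [Subsingleton.elim (Fin.init a) (Fin.init b)]; exact Fin.snoc_init_self b
      rw [e1, e2, e3] at hmem
      exact hmem
    have hIccSub : ∀ a ∈ S, ∀ b ∈ S, a (Fin.last 0) ≤ b (Fin.last 0) → Set.Icc a b ⊆ S := by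
      intro a ha b hb hab x hx
      have hpath := hsc a ha b hb
      rw [stairPath_succ a b hab] at hpath
      refine hpath (Or.inl ?_)
      have e3 : (Fin.snoc (Fin.init a) (b (Fin.last 0)) : Fin 1 → ℝ) = b := by
        rw [Subsingleton.elim (Fin.init a) (Fin.init b)]; exact Fin.snoc_init_self b
      rw [e3]
      exact hseg a b hab hx
    have he : (2:ℝ) ≤ Real.exp 1 := by
      have := Real.add_one_le_exp 1; linarith
    have hgoal : ENNReal.ofReal v
        ≤ ENNReal.ofReal (Real.exp 1 * v * (Real.log (1 / v)) ^ (1 - 1)) := by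
      refine ENNReal.ofReal_le_ofReal ?_
      simp only [Nat.sub_self, pow_zero, mul_one]
      nlinarith
    rcases Set.eq_empty_or_nonempty S with hSe | hSne
    · rw [hSe]; simp
    refine le_trans ?_ hgoal
    set A : Set ℝ := (fun x : Fin 1 → ℝ => x (Fin.last 0)) '' S with hA
    have hAne : A.Nonempty := hSne.image _
    have hA01 : A ⊆ Set.Icc (0:ℝ) 1 := by
      rintro p ⟨x, hx, rfl⟩
      have h := hS hx
      rw [Set.mem_Icc] at h
      exact ⟨h.1 (Fin.last 0), h.2 (Fin.last 0)⟩
    have hAbddA : BddAbove A := ⟨1, fun p hp => (hA01 hp).2⟩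
    have hAbddB : BddBelow A := ⟨0, fun p hp => (hA01 hp).1⟩
    set m := sInf A with hm
    set M := sSup A with hM
    have hMm : M - m ≤ v := by
      refine le_of_forall_pos_le_add ?_
      intro ε hε
      obtain ⟨p, hpA, hpm⟩ := exists_lt_of_csInf_lt hAne (show m < m + ε/2 by linarith)
      obtain ⟨q, hqA, hqM⟩ := exists_lt_of_lt_csSup hAne (show M - ε/2 < M by linarith)
      have hmq : m ≤ q := csInf_le hAbddB hqA
      have hpM : p ≤ M := le_csSup hAbddA hpA
      obtain ⟨xp, hxp, hxpe⟩ := hpA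
      obtain ⟨xq, hxq, hxqe⟩ := hqA
      have hp' : xp (Fin.last 0) = p := hxpe
      have hq' : xq (Fin.last 0) = q := hxqe
      rcases le_or_gt p q with hpq | hpq
      · have hlast : xp (Fin.last 0) ≤ xq (Fin.last 0) := by rw [hp', hq']; exact hpq
        have hle : xp ≤ xq := by intro i; rw [hi i]; exact hlast
        have hsub := hIccSub xp hxp xq hxq hlast
        have hvol := hbox xp xq hle hsub
        have hveq : volume (Set.Icc xp xq)
            = ENNReal.ofReal (xq (Fin.last 0) - xp (Fin.last 0)) := by
          rw [Real.volume_Icc_pi, Fin.prod_univ_one, hi 0]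
        rw [hveq, hp', hq'] at hvol
        have hqp : q - p ≤ v := (ENNReal.ofReal_le_ofReal_iff hv0.le).mp hvol
        linarith
      · linarith
    have hsub2 : S ⊆ Set.Icc (fun _ : Fin 1 => m) (fun _ : Fin 1 => M) := by
      intro x hx
      rw [Set.mem_Icc]
      constructor <;> intro i
      · exact csInf_le hAbddB ⟨x, hx, by rw [hi i]⟩
      · exact le_csSup hAbddA ⟨x, hx, by rw [hi i]⟩
    calc volume S ≤ volume (Set.Icc (fun _ : Fin 1 => m) (fun _ : Fin 1 => M)) :=
          measure_mono hsub2
    _ = ENNReal.ofReal (M - m) := by rw [Real.volume_Icc_pi, Fin.prod_univ_one]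
    _ ≤ ENNReal.ofReal v := ENNReal.ofReal_le_ofReal hMm
  | succ d hd ih =>
    intro S hS hsc v hv0 hv1 hbox
    have hEv : 0 < Real.exp 1 * v := by positivity
    rcases Set.eq_empty_or_nonempty S with hSe | hSne
    · rw [hSe]; simp
    set L : Set ℝ := {t : ℝ | (Slice S t).Nonempty} with hL
    have hLne : L.Nonempty := by
      obtain ⟨x, hx⟩ := hSne
      refine ⟨x (Fin.last d), ⟨Fin.init x, ?_⟩⟩
      show Fin.snoc (Fin.init x) (x (Fin.last d)) ∈ S
      rw [Fin.snoc_init_self]; exact hx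
    have hL01 : L ⊆ Set.Icc (0:ℝ) 1 := by
      rintro t ⟨z, hz⟩
      have h := hS hz
      rw [Set.mem_Icc] at h
      have h1 := h.1 (Fin.last d)
      have h2 := h.2 (Fin.last d)
      constructor
      · simpa [Fin.snoc_last] using h1
      · simpa [Fin.snoc_last] using h2
    have hLbdd : BddAbove L := ⟨1, fun t ht => (hL01 ht).2⟩
    set T := sSup L with hT
    have hT0 : 0 ≤ T := by
      obtain ⟨t0, ht0⟩ := hLne
      exact le_trans (hL01 ht0).1 (le_csSup hLbdd ht0)
    have hT1 : T ≤ 1 := csSup_le hLne (fun t ht => (hL01 ht).2)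
    have hSliceCube : ∀ t : ℝ, Slice S t ⊆ Set.Icc 0 1 := by
      intro t x hx
      have h := hS hx
      rw [Set.mem_Icc] at h ⊢
      constructor <;> intro i
      · have := h.1 (Fin.castSucc i); simpa [Fin.snoc_castSucc] using this
      · have := h.2 (Fin.castSucc i); simpa [Fin.snoc_castSucc] using this
    have hcube := volume_cube d
    have hSliceVol1 : ∀ t : ℝ, volume (Slice S t) ≤ 1 := fun t =>
      le_trans (measure_mono (hSliceCube t)) (le_of_eq hcube)
    have hup : ∀ s : ℝ, s < T → ∀ (x : Fin d → ℝ) (t : ℝ), x ∈ Slice S t → t ≤ s →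
        x ∈ Slice S s := by
      intro s hsT x t hx hts
      obtain ⟨u, huL, hsu⟩ := exists_lt_of_lt_csSup hLne hsT
      obtain ⟨y, hy⟩ := huL
      have hxu : x ∈ Slice S u := mem_slice_of_le hsc hx hy (le_trans hts hsu.le)
      exact mem_slice_between hsc hx hxu hts hsu.le
    have hslice : ∀ t : ℝ, t < T → volume (Slice S t)
        ≤ ENNReal.ofReal (Gfun (d-1) v (T - t)) := by
      intro t htT
      by_cases hc : Real.exp 1 * v ≤ T - t
      · have hTt : 0 < T - t := lt_of_lt_of_le hEv hc
        have hv0' : 0 < v / (T - t) := div_pos hv0 hTt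
        have hv1' : v / (T - t) ≤ 1 / Real.exp 1 := by
          rw [div_le_div_iff₀ hTt (Real.exp_pos 1)]
          nlinarith
        have hbox' : ∀ a b : Fin d → ℝ, a ≤ b → Set.Icc a b ⊆ Slice S t →
            volume (Set.Icc a b) ≤ ENNReal.ofReal (v / (T - t)) := by
          intro a b hab hsub
          have hXne : volume (Set.Icc a b) ≠ ⊤ := by
            rw [Real.volume_Icc_pi]
            exact (ENNReal.prod_lt_top (fun i _ => ENNReal.ofReal_lt_top)).ne
          set x : ℝ := (volume (Set.Icc a b)).toReal with hx
          have hx0 : 0 ≤ x := ENNReal.toReal_nonneg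
          have hXeq : volume (Set.Icc a b) = ENNReal.ofReal x :=
            (ENNReal.ofReal_toReal hXne).symm
          have hkey : ∀ s : ℝ, t < s → s < T → x * (s - t) ≤ v := by
            intro s hts hsT
            have hAB : (Fin.snoc a t : Fin (d+1) → ℝ) ≤ Fin.snoc b s := by
              intro i
              refine Fin.lastCases ?_ (fun j => ?_) i
              · simp only [Fin.snoc_last]; linarith
              · simp only [Fin.snoc_castSucc]; exact hab j
            have hsubS : Set.Icc (Fin.snoc a t : Fin (d+1) → ℝ) (Fin.snoc b s) ⊆ S := by
              intro z hz
              rw [Set.mem_Icc] at hz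
              have hz'ab : Fin.init z ∈ Set.Icc a b := by
                rw [Set.mem_Icc]
                constructor <;> intro j
                · have := hz.1 (Fin.castSucc j); simpa [Fin.init, Fin.snoc_castSucc] using this
                · have := hz.2 (Fin.castSucc j); simpa [Fin.init, Fin.snoc_castSucc] using this
              have hr1 : t ≤ z (Fin.last d) := by
                have := hz.1 (Fin.last d); simpa [Fin.snoc_last] using this
              have hr2 : z (Fin.last d) ≤ s := by
                have := hz.2 (Fin.last d); simpa [Fin.snoc_last] using this
              have hz't : Fin.init z ∈ Slice S t := hsub hz'ab
              have hz'r : Fin.init z ∈ Slice S (z (Fin.last d)) :=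
                hup _ (lt_of_le_of_lt hr2 hsT) _ t hz't hr1
              have hzz : Fin.snoc (Fin.init z) (z (Fin.last d)) = z := Fin.snoc_init_self z
              exact hzz ▸ hz'r
            have hvol := hbox _ _ hAB hsubS
            rw [volume_snoc_Icc] at hvol
            have hprod : (∏ i : Fin d, ENNReal.ofReal (b i - a i)) = ENNReal.ofReal x :=
              Real.volume_Icc_pi.symm.trans hXeq
            rw [hprod, ← ENNReal.ofReal_mul hx0] at hvol
            exact (ENNReal.ofReal_le_ofReal_iff hv0.le).mp hvol
          have hxle : x ≤ v / (T - t) := by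
            by_contra hcon
            push_neg at hcon
            have hx0' : 0 < x := lt_of_le_of_lt (by positivity : (0:ℝ) ≤ v/(T-t)) hcon
            have h1 : v / x < T - t := by
              rw [div_lt_iff₀ hx0']
              calc v = (v/(T-t)) * (T-t) := by field_simp
              _ < x * (T-t) := mul_lt_mul_of_pos_right hcon hTt
              _ = (T-t) * x := by ring
            have hvx0 : 0 < v / x := by positivity
            set s := (t + v/x + T)/2 with hs
            have hts : t < s := by rw [hs]; linarith
            have hsT' : s < T := by rw [hs]; linarith
            have hks := hkey s hts hsT'
            have hst : s - t ≤ v / x :=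
              (le_div_iff₀ hx0').mpr (by linarith : (s - t) * x ≤ v)
            rw [hs] at hst
            linarith
          rw [hXeq]
          exact ENNReal.ofReal_le_ofReal hxle
        have hIH := ih (Slice S t) (hSliceCube t) (slice_stairConvex hsc t)
          (v/(T-t)) hv0' hv1' hbox'
        rw [one_div_div, ← mul_div_assoc] at hIH
        rw [Gfun, if_pos hc]
        rcases le_total (1:ℝ) (Real.exp 1 * v / (T - t) * Real.log ((T-t)/v) ^ (d-1))
          with hmin | hmin
        · rw [min_eq_left hmin, ENNReal.ofReal_one]
          exact hSliceVol1 t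
        · rw [min_eq_right hmin]
          exact hIH
      · rw [Gfun, if_neg hc, ENNReal.ofReal_one]
        exact hSliceVol1 t
    set em := MeasurableEquiv.piFinSuccAbove (fun _ : Fin (d+1) => ℝ) (Fin.last d) with hem
    have hmemL : ∀ y ∈ S, Fin.init y ∈ Slice S (y (Fin.last d)) := by
      intro y hy
      show Fin.snoc (Fin.init y) (y (Fin.last d)) ∈ S
      rw [Fin.snoc_init_self]; exact hy
    rcases eq_or_lt_of_le hT0 with hTz | hTpos
    · have hsub0 : S ⊆ em ⁻¹' (Set.Icc (0:ℝ) 0 ×ˢ Set.Icc (0:Fin d → ℝ) 1) := by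
        intro y hy
        rw [Set.mem_preimage, hem, piFinSuccAbove_last_apply, Set.mem_prod]
        constructor
        · have h0 : 0 ≤ y (Fin.last d) := by
            have := hS hy; rw [Set.mem_Icc] at this; exact this.1 _
          have hT' : y (Fin.last d) ≤ T := le_csSup hLbdd ⟨Fin.init y, hmemL y hy⟩
          rw [Set.mem_Icc]
          exact ⟨h0, by linarith [hTz ▸ hT']⟩
        · exact hSliceCube _ (hmemL y hy)
      calc volume S ≤ volume (em ⁻¹' (Set.Icc (0:ℝ) 0 ×ˢ Set.Icc (0:Fin d→ℝ) 1)) :=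
            measure_mono hsub0
      _ = volume (Set.Icc (0:ℝ) 0) * volume (Set.Icc (0:Fin d→ℝ) 1) := by
            rw [hem]; exact volume_preimage_prod _ _ measurableSet_Icc measurableSet_Icc
      _ = 0 := by rw [Real.volume_Icc]; simp
      _ ≤ _ := zero_le
    · have hmono' : Monotone (fun t => Gfun (d-1) v (T - t)) := by
        intro t1 t2 h
        exact Gfun_anti (d-1) hv0 (by linarith : T - t2 ≤ T - t1)
      have hg1' : ∀ t : ℝ, Gfun (d-1) v (T - t) ≤ 1 := fun t => Gfun_le_one _ _ _
      have hg0' : ∀ t : ℝ, 0 ≤ Gfun (d-1) v (T - t) := fun t => Gfun_nonneg _ hv0 _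
      have hmain : ∀ n : ℕ, 1 ≤ n → volume S ≤
          ENNReal.ofReal ((∫ t in (0:ℝ)..T, Gfun (d-1) v (T - t)) + T/n) := by
        intro n hn
        have hn0 : (0:ℝ) < n := by exact_mod_cast Nat.pos_of_ne_zero (by omega)
        have hΔ : 0 < T / n := by positivity
        have hnΔ : (n:ℝ) * (T / n) = T := by field_simp
        set K : ℕ → Set (Fin d → ℝ) := fun i =>
          if i + 1 < n then toMeasurable volume (Slice S (((i:ℝ)+1) * (T/n)))
          else Set.Icc 0 1 with hK
        have hKmeas : ∀ i, MeasurableSet (K i) := by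
          intro i; rw [hK]; dsimp only; split
          · exact measurableSet_toMeasurable _ _
          · exact measurableSet_Icc
        have hKvol : ∀ i, volume (K i)
            ≤ ENNReal.ofReal (Gfun (d-1) v (T - ((i:ℝ)+1) * (T/n))) := by
          intro i; rw [hK]; dsimp only; split
          · rename_i hin
            rw [measure_toMeasurable]
            refine hslice _ ?_
            have hcast : ((i:ℝ)+1) ≤ (n:ℝ) - 1 := by
              have : (i:ℝ) + 1 + 1 ≤ n := by exact_mod_cast hin
              linarith
            nlinarith
          · rename_i hin
            have hin' : (n:ℝ) ≤ (i:ℝ)+1 := by exact_mod_cast Nat.le_of_not_lt hin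
            have hle0 : T - ((i:ℝ)+1) * (T/n) ≤ 0 := by nlinarith
            rw [Gfun, if_neg (by nlinarith : ¬(Real.exp 1 * v ≤ T - ((i:ℝ)+1)*(T/n)))]
            rw [ENNReal.ofReal_one]
            exact le_of_eq hcube
        have hcover : S ⊆ ⋃ i ∈ Finset.range n,
            em ⁻¹' (Set.Icc ((i:ℝ)*(T/n)) (((i:ℝ)+1)*(T/n)) ×ˢ K i) := by
          intro y hy
          have hyt : Fin.init y ∈ Slice S (y (Fin.last d)) := hmemL y hy
          have ht0 : 0 ≤ y (Fin.last d) := by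
            have := hS hy; rw [Set.mem_Icc] at this; exact this.1 _
          have htT : y (Fin.last d) ≤ T := le_csSup hLbdd ⟨Fin.init y, hyt⟩
          set t := y (Fin.last d) with hty
          set i := min (n-1) ⌊t/(T/n)⌋₊ with hidef
          have hin : i < n := lt_of_le_of_lt (min_le_left _ _) (by omega)
          have hti : (i:ℝ) * (T/n) ≤ t := by
            have h1 : (i:ℝ) ≤ (⌊t/(T/n)⌋₊ : ℝ) := by
              exact_mod_cast Nat.cast_le.mpr (min_le_right (n-1) _)
            have h2 : (⌊t/(T/n)⌋₊ : ℝ) ≤ t/(T/n) := Nat.floor_le (by positivity)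
            have h3 : (t/(T/n)) * (T/n) = t := by field_simp
            nlinarith
          have hti2 : t ≤ ((i:ℝ)+1) * (T/n) := by
            rcases le_or_gt (⌊t/(T/n)⌋₊ : ℕ) (n-1) with hmin | hmin
            · have hieq : i = ⌊t/(T/n)⌋₊ := min_eq_right hmin
              have h3 : t/(T/n) < (⌊t/(T/n)⌋₊:ℝ) + 1 := Nat.lt_floor_add_one _
              have h4 : (t/(T/n)) * (T/n) = t := by field_simp
              rw [hieq]
              nlinarith
            · have hieq : i = n-1 := min_eq_left hmin.le
              have h5 : ((n-1 : ℕ):ℝ) = (n:ℝ) - 1 := by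
                rw [Nat.cast_sub hn]; norm_num
              rw [hieq, h5]
              have h6 : ((n:ℝ) - 1 + 1) * (T/n) = T := by
                rw [sub_add_cancel]; exact hnΔ
              rw [h6]; exact htT
          rw [Set.mem_iUnion₂]
          refine ⟨i, Finset.mem_range.mpr hin, ?_⟩
          rw [Set.mem_preimage, hem, piFinSuccAbove_last_apply, Set.mem_prod]
          constructor
          · exact Set.mem_Icc.mpr ⟨hti, hti2⟩
          · rw [hK]; dsimp only; split
            · rename_i hin2
              refine subset_toMeasurable _ _ ?_
              have hcast : ((i:ℝ)+1) ≤ (n:ℝ) - 1 := by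
                have : (i:ℝ) + 1 + 1 ≤ n := by exact_mod_cast hin2
                linarith
              have hiT : ((i:ℝ)+1) * (T/n) < T := by nlinarith
              exact hup _ hiT _ t hyt hti2
            · exact hSliceCube t hyt
        calc volume S
            ≤ volume (⋃ i ∈ Finset.range n,
              em ⁻¹' (Set.Icc ((i:ℝ)*(T/n)) (((i:ℝ)+1)*(T/n)) ×ˢ K i)) :=
              measure_mono hcover
        _ ≤ ∑ i ∈ Finset.range n,
              volume (em ⁻¹' (Set.Icc ((i:ℝ)*(T/n)) (((i:ℝ)+1)*(T/n)) ×ˢ K i)) :=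
              measure_biUnion_finset_le _ _
        _ ≤ ∑ i ∈ Finset.range n,
              ENNReal.ofReal ((T/n) * Gfun (d-1) v (T - ((i:ℝ)+1)*(T/n))) := by
            refine Finset.sum_le_sum ?_
            intro i _
            rw [hem, volume_preimage_prod _ _ measurableSet_Icc (hKmeas i), Real.volume_Icc]
            have h5 : ((i:ℝ)+1)*(T/n) - (i:ℝ)*(T/n) = T/n := by ring
            rw [h5, ENNReal.ofReal_mul hΔ.le]
            exact mul_le_mul_right (hKvol i) _
        _ = ENNReal.ofReal (∑ i ∈ Finset.range n,
              (T/n) * Gfun (d-1) v (T - ((i:ℝ)+1)*(T/n))) := by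
            rw [ENNReal.ofReal_sum_of_nonneg]
            intro i _
            exact mul_nonneg hΔ.le (Gfun_nonneg _ hv0 _)
        _ ≤ ENNReal.ofReal ((∫ t in (0:ℝ)..T, Gfun (d-1) v (T - t)) + T/n) := by
            refine ENNReal.ofReal_le_ofReal ?_
            exact sum_G_le (fun t => Gfun (d-1) v (T - t)) hmono' hg1' hg0' hTpos n hn
      have hlim : Filter.Tendsto
          (fun n : ℕ => ENNReal.ofReal ((∫ t in (0:ℝ)..T, Gfun (d-1) v (T - t)) + T/n))
          Filter.atTop
          (nhds (ENNReal.ofReal ((∫ t in (0:ℝ)..T, Gfun (d-1) v (T - t)) + 0))) := by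
        refine (ENNReal.continuous_ofReal.tendsto _).comp ?_
        exact Filter.Tendsto.const_add _ (tendsto_const_div_atTop_nhds_zero_nat T)
      rw [add_zero] at hlim
      have hvolS : volume S ≤ ENNReal.ofReal (∫ t in (0:ℝ)..T, Gfun (d-1) v (T - t)) := by
        refine ge_of_tendsto hlim ?_
        filter_upwards [Filter.eventually_ge_atTop 1] with n hn
        exact hmain n hn
      refine le_trans hvolS (ENNReal.ofReal_le_ofReal ?_)
      have hintb := integral_G_le (d-1) hv0 hT0 hT1 hv1
      have hd1 : d - 1 + 1 = d + 1 - 1 := by omega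
      rw [hd1] at hintb
      exact hintb


end SCproof

/-- If a stair-convex `S ⊆ [0,1]^d` contains no closed axis-parallel box of volume
larger than `v` (for `0 < v ≤ 1/e`), then `vol(S) ≤ e · v · (ln (1/v))^(d-1)`. -/
theorem stair_convex_volume_of_small_boxes (d : ℕ) (hd : 1 ≤ d)
    (S : Set (Fin d → ℝ)) (hS : S ⊆ Set.Icc 0 1) (hsc : StairConvex S)
    (v : ℝ) (hv0 : 0 < v) (hv1 : v ≤ 1 / Real.exp 1)
    (hbox : ∀ a b : Fin d → ℝ, a ≤ b → Set.Icc a b ⊆ S →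
      MeasureTheory.volume (Set.Icc a b) ≤ ENNReal.ofReal v) :
    MeasureTheory.volume S ≤
      ENNReal.ofReal (Real.exp 1 * v * (Real.log (1 / v)) ^ (d - 1)) :=
  SCproof.main d hd S hS hsc v hv0 hv1 hbox
end

section
/- Let d ≥ 1 be an integer, let X ⊆ ℝ^d be a point set, and let x ∈ ℝ^d. Then x ∈ sconv(X) if and only if for every j = 0, 1, …, d, the set X contains a point of type j with respect to x. -/
/-- The stair-convex hull: the intersection of all stair-convex sets containing `X`. -/
def sconv {d : ℕ} (X : Set (Fin d → ℝ)) : Set (Fin d → ℝ) :=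
  ⋂₀ {S : Set (Fin d → ℝ) | StairConvex S ∧ X ⊆ S}

/-- `b` has type `j` with respect to `a` (coordinates being 1-based, so the `j`-th
coordinate of a point `p : Fin d → ℝ` is `p ⟨j-1, _⟩`).  Type `0`: `b i ≤ a i` for all `i`.
Type `j ≥ 1`: `b_j ≥ a_j` and `b_i ≤ a_i` for all `i = j+1, …, d`. -/
def HasTypeWrt {d : ℕ} (a b : Fin d → ℝ) : ℕ → Prop
  | 0 => ∀ i : Fin d, b i ≤ a i
  | (j+1) => ∃ hj : j < d, a ⟨j, hj⟩ ≤ b ⟨j, hj⟩ ∧ ∀ i : Fin d, j < (i : ℕ) → b i ≤ a i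

lemma type_refl {d : ℕ} (a : Fin d → ℝ) {j : ℕ} (hj : j ≤ d) : HasTypeWrt a a j := by
  cases j with
  | zero => exact fun i => le_rfl
  | succ k => exact ⟨by omega, le_rfl, fun i _ => le_rfl⟩

lemma type_init {n : ℕ} {x y : Fin (n+1) → ℝ} {j : ℕ} (hj : j ≤ n) (h : HasTypeWrt x y j) :
    HasTypeWrt (Fin.init x) (Fin.init y) j := by
  cases j with
  | zero => exact fun i => h (Fin.castSucc i)
  | succ k =>
    obtain ⟨hk, h1, h2⟩ := h
    exact ⟨by omega, h1, fun i hi => h2 (Fin.castSucc i) (by simpa using hi)⟩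

lemma type_last_le {n : ℕ} {x b : Fin (n+1) → ℝ} {j : ℕ} (hj : j ≤ n) (h : HasTypeWrt x b j) :
    b (Fin.last n) ≤ x (Fin.last n) := by
  cases j with
  | zero => exact h _
  | succ k =>
    obtain ⟨hk, _, h2⟩ := h
    exact h2 (Fin.last n) (by simp [Fin.last]; omega)

lemma type_snoc {n : ℕ} {q : Fin n → ℝ} {b : Fin (n+1) → ℝ} {C : ℝ} {j : ℕ} (hj : j ≤ n)
    (h : HasTypeWrt q (Fin.init b) j) (hb : b (Fin.last n) ≤ C) :
    HasTypeWrt (Fin.snoc q C) b j := by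
  cases j with
  | zero =>
    intro i
    rcases Fin.eq_castSucc_or_eq_last i with ⟨i', rfl⟩ | rfl
    · simpa [Fin.snoc_castSucc, Fin.init] using h i'
    · simpa [Fin.snoc_last] using hb
  | succ k =>
    obtain ⟨hk, h1, h2⟩ := h
    refine ⟨by omega, ?_, ?_⟩
    · show (Fin.snoc q C : Fin (n+1) → ℝ) (Fin.castSucc ⟨k, hk⟩) ≤ b (Fin.castSucc ⟨k, hk⟩)
      rw [Fin.snoc_castSucc]; exact h1
    · intro i hi
      rcases Fin.eq_castSucc_or_eq_last i with ⟨i', rfl⟩ | rfl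
      · rw [Fin.snoc_castSucc]; exact h2 i' (by simpa using hi)
      · rw [Fin.snoc_last]; exact hb

lemma path_type : ∀ (d : ℕ) (a c b b' : Fin d → ℝ) (j : ℕ),
    HasTypeWrt a b j → HasTypeWrt c b' j →
    ∀ p ∈ stairPath d a c, HasTypeWrt p b j ∨ HasTypeWrt p b' j := by
  intro d
  induction d with
  | zero =>
    intro a c b b' j h1 h2 p _
    have hpa : p = a := funext fun i => i.elim0
    exact Or.inl (hpa ▸ h1)
  | succ n ih =>
    have main : ∀ (a c b b' : Fin (n+1) → ℝ) (j : ℕ), HasTypeWrt a b j → HasTypeWrt c b' j →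
        a (Fin.last n) ≤ c (Fin.last n) →
        ∀ p ∈ (segment ℝ a (Fin.snoc (Fin.init a) (c (Fin.last n))) ∪
          (fun z => Fin.snoc z (c (Fin.last n))) '' stairPath n (Fin.init a) (Fin.init c)),
        HasTypeWrt p b j ∨ HasTypeWrt p b' j := by
      intro a c b b' j h1 h2 hle p hp
      rcases hp with hseg | ⟨q, hq, rfl⟩
      · -- p on the initial segment
        obtain ⟨u, v, hu, hv, huv, hpe⟩ := hseg
        have hplast : p (Fin.last n) = u * a (Fin.last n) + v * c (Fin.last n) := by
          rw [← hpe]; simp [Fin.snoc_last]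
        have hpcast : ∀ i : Fin n, p (Fin.castSucc i) = a (Fin.castSucc i) := by
          intro i
          rw [← hpe]
          simp only [Pi.add_apply, Pi.smul_apply, smul_eq_mul, Fin.snoc_castSucc, Fin.init]
          linear_combination (a (Fin.castSucc i)) * huv
        have h1p : a (Fin.last n) ≤ p (Fin.last n) := by
          have e : u * a (Fin.last n) + v * a (Fin.last n) = a (Fin.last n) := by
            linear_combination (a (Fin.last n)) * huv
          rw [hplast]; linarith [mul_le_mul_of_nonneg_left hle hv]
        have h2p : p (Fin.last n) ≤ c (Fin.last n) := by
          have e : u * c (Fin.last n) + v * c (Fin.last n) = c (Fin.last n) := by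
            linear_combination (c (Fin.last n)) * huv
          rw [hplast]; linarith [mul_le_mul_of_nonneg_left hle hu]
        cases j with
        | zero =>
          left
          intro i
          rcases Fin.eq_castSucc_or_eq_last i with ⟨i', rfl⟩ | rfl
          · rw [hpcast]; exact h1 _
          · exact le_trans (h1 _) h1p
        | succ k =>
          obtain ⟨hk, hxb, hab⟩ := h1
          by_cases hkn : k < n
          · left
            refine ⟨hk, ?_, ?_⟩
            · have he : (⟨k, hk⟩ : Fin (n+1)) = Fin.castSucc ⟨k, hkn⟩ := rfl
              rw [he, hpcast, ← he]; exact hxb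
            · intro i hi
              rcases Fin.eq_castSucc_or_eq_last i with ⟨i', rfl⟩ | rfl
              · rw [hpcast]; exact hab _ hi
              · exact le_trans (hab _ (by simp [Fin.last]; omega)) h1p
          · have hkn' : k = n := by omega
            right
            obtain ⟨hk2, hcb', _⟩ := h2
            refine ⟨hk, ?_, ?_⟩
            · have he : (⟨k, hk⟩ : Fin (n+1)) = Fin.last n := Fin.ext (by simpa using hkn')
              have he2 : (⟨k, hk2⟩ : Fin (n+1)) = Fin.last n := Fin.ext (by simpa using hkn')
              rw [he]
              exact le_trans h2p (he2 ▸ hcb')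
            · intro i hi
              exact absurd i.isLt (by omega)
      · -- p in the image part
        have hjn : j ≤ n ∨ j = n + 1 := by
          cases j with
          | zero => exact Or.inl (Nat.zero_le _)
          | succ k =>
            obtain ⟨hk, _, _⟩ := h1
            omega
        rcases hjn with hjn | hj1
        · have hblast : b (Fin.last n) ≤ c (Fin.last n) :=
            le_trans (type_last_le hjn h1) hle
          have hb'last : b' (Fin.last n) ≤ c (Fin.last n) := type_last_le hjn h2
          rcases ih (Fin.init a) (Fin.init c) (Fin.init b) (Fin.init b') j
              (type_init hjn h1) (type_init hjn h2) q hq with hl | hr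
          · exact Or.inl (type_snoc hjn hl hblast)
          · exact Or.inr (type_snoc hjn hr hb'last)
        · subst hj1
          right
          obtain ⟨hk2, hcb', _⟩ := h2
          refine ⟨by omega, ?_, ?_⟩
          · show (Fin.snoc q (c (Fin.last n)) : Fin (n+1) → ℝ) (Fin.last n) ≤ b' (Fin.last n)
            rw [Fin.snoc_last]
            exact hcb'
          · intro i hi
            exact absurd i.isLt (by omega)
    intro a c b b' j h1 h2 p hp
    by_cases hle : a (Fin.last n) ≤ c (Fin.last n)
    · simp only [stairPath, if_pos hle] at hp
      exact main a c b b' j h1 h2 hle p hp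
    · simp only [stairPath, if_neg hle] at hp
      exact (main c a b' b j h2 h1 (le_of_not_ge hle) p hp).symm

lemma mem_of_types : ∀ (d : ℕ) (b : ℕ → Fin d → ℝ) (x : Fin d → ℝ) (S : Set (Fin d → ℝ)),
    StairConvex S → (∀ j ≤ d, b j ∈ S) → (∀ j ≤ d, HasTypeWrt x (b j) j) → x ∈ S := by
  intro d
  induction d with
  | zero =>
    intro b x S _ hbS _
    have hx : x = b 0 := funext fun i => i.elim0
    rw [hx]; exact hbS 0 le_rfl
  | succ n ih =>
    intro b x S hS hbS hbt
    set t := x (Fin.last n) with ht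
    have hblast : ∀ j ≤ n, b j (Fin.last n) ≤ t := fun j hj =>
      type_last_le hj (hbt j (by omega))
    have htop : t ≤ b (n+1) (Fin.last n) := by
      obtain ⟨hk, h1, _⟩ := hbt (n+1) le_rfl
      exact h1
    have hcS : ∀ j ≤ n, Fin.snoc (Fin.init (b j)) t ∈ S := by
      intro j hj
      have h1 : b j (Fin.last n) ≤ b (n+1) (Fin.last n) := le_trans (hblast j hj) htop
      apply hS (b j) (hbS j (by omega)) (b (n+1)) (hbS (n+1) le_rfl)
      simp only [stairPath, if_pos h1]
      left
      have htm : t ∈ segment ℝ (b j (Fin.last n)) (b (n+1) (Fin.last n)) := by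
        rw [segment_eq_Icc h1]
        exact ⟨hblast j hj, htop⟩
      obtain ⟨u, v, hu, hv, huv, huvt⟩ := htm
      refine ⟨u, v, hu, hv, huv, ?_⟩
      funext i
      rcases Fin.eq_castSucc_or_eq_last i with ⟨i', rfl⟩ | rfl
      · simp only [Pi.add_apply, Pi.smul_apply, smul_eq_mul, Fin.snoc_castSucc, Fin.init]
        linear_combination (b j (Fin.castSucc i')) * huv
      · simp only [Pi.add_apply, Pi.smul_apply, smul_eq_mul, Fin.snoc_last]
        exact huvt
    set S' : Set (Fin n → ℝ) := {z | Fin.snoc z t ∈ S} with hS'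
    have hS'c : StairConvex S' := by
      intro z hz w hw q hq
      show Fin.snoc q t ∈ S
      apply hS (Fin.snoc z t) hz (Fin.snoc w t) hw
      simp only [stairPath, Fin.snoc_last, if_pos (le_refl t), Fin.init_snoc]
      exact Or.inr ⟨q, hq, rfl⟩
    have hres := ih (fun j => Fin.init (b j)) (Fin.init x) S' hS'c
      (fun j hj => hcS j hj)
      (fun j hj => type_init (by omega) (hbt j (by omega)))
    have : Fin.snoc (Fin.init x) t ∈ S := hres
    rwa [ht, Fin.snoc_init_self] at this


/-- A point `x` lies in the stair-convex hull of `X` iff `X` contains a point of type `j`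
with respect to `x` for every `j = 0, 1, …, d`. -/
theorem mem_sconv_iff_types (d : ℕ) (hd : 1 ≤ d) (X : Set (Fin d → ℝ)) (x : Fin d → ℝ) :
    x ∈ sconv X ↔ ∀ j : ℕ, j ≤ d → ∃ b ∈ X, HasTypeWrt x b j := by

  constructor
  · intro hx j hj
    have hT : StairConvex {p : Fin d → ℝ | ∃ b ∈ X, HasTypeWrt p b j} := by
      intro a ha c hc p hp
      obtain ⟨ba, hbaX, hba⟩ := ha
      obtain ⟨bc, hbcX, hbc⟩ := hc
      rcases path_type d a c ba bc j hba hbc p hp with h | h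
      · exact ⟨ba, hbaX, h⟩
      · exact ⟨bc, hbcX, h⟩
    have hXT : X ⊆ {p : Fin d → ℝ | ∃ b ∈ X, HasTypeWrt p b j} :=
      fun a ha => ⟨a, ha, type_refl a hj⟩
    exact hx _ ⟨hT, hXT⟩
  · intro h
    rw [sconv, Set.mem_sInter]
    rintro S ⟨hSc, hXS⟩
    classical
    set b : ℕ → Fin d → ℝ := fun j => if hj : j ≤ d then (h j hj).choose else x with hb
    have hbX : ∀ j ≤ d, b j ∈ X := by
      intro j hj
      simp only [hb, dif_pos hj]
      exact (h j hj).choose_spec.1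
    have hbt : ∀ j ≤ d, HasTypeWrt x (b j) j := by
      intro j hj
      simp only [hb, dif_pos hj]
      exact (h j hj).choose_spec.2
    exact mem_of_types d b x S hSc (fun j hj => hXS (hbX j hj)) hbt
end

section
/- Let d ≥ 2 be an integer, let X ⊆ ℝ^d, and let y ∈ ℝ be such that there exists x ∈ X with x_d ≥ y (i.e., the hyperplane {x : x_d = y} does not lie entirely above X). Let X' = {(x_1,…,x_{d−1}) ∈ ℝ^{d−1} : x ∈ X, x_d ≤ y} be the projection of the part of X at height ≤ y. Then {z ∈ ℝ^{d−1} : (z,y) ∈ sconv(X)} = sconv(X'), where the latter is the stair-convex hull in ℝ^{d−1}. -/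
lemma subset_sconv {d : ℕ} (X : Set (Fin d → ℝ)) : X ⊆ sconv X :=
  fun _ hx => Set.mem_sInter.2 fun _ hS => hS.2 hx

lemma sconv_subset {d : ℕ} {X S : Set (Fin d → ℝ)} (h1 : StairConvex S) (h2 : X ⊆ S) :
    sconv X ⊆ S := fun _ hx => hx S ⟨h1, h2⟩

lemma stairConvex_sconv {d : ℕ} (X : Set (Fin d → ℝ)) : StairConvex (sconv X) :=
  fun a ha b hb _ hp => Set.mem_sInter.2 fun S hS =>
    hS.1 a (ha S hS) b (hb S hS) hp

/-- If the horizontal hyperplane at height `y` does not lie entirely above `X ⊆ ℝ^(d+1)`,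
then the slice of `sconv X` at height `y` equals the `ℝ^d` stair-convex hull of the
vertical projection of the part of `X` at height `≤ y`. -/
theorem sconv_slice (d : ℕ) (hd : 1 ≤ d) (X : Set (Fin (d + 1) → ℝ)) (y : ℝ)
    (hy : ∃ x ∈ X, y ≤ x (Fin.last d)) :
    {z : Fin d → ℝ | Fin.snoc z y ∈ sconv X} =
      sconv (Fin.init '' {x ∈ X | x (Fin.last d) ≤ y}) := by
  obtain ⟨x₀, hx₀X, hx₀y⟩ := hy
  set X' : Set (Fin d → ℝ) := Fin.init '' {x ∈ X | x (Fin.last d) ≤ y} with hX'def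
  apply Set.Subset.antisymm
  · -- slice ⊆ sconv X'
    set S : Set (Fin (d + 1) → ℝ) :=
      {v | y < v (Fin.last d) ∨ (v (Fin.last d) ≤ y ∧ Fin.init v ∈ sconv X')} with hSdef
    have key : ∀ a ∈ S, ∀ b ∈ S, a (Fin.last d) ≤ b (Fin.last d) →
        (segment ℝ a (Fin.snoc (Fin.init a) (b (Fin.last d))) ∪
          (fun w => Fin.snoc w (b (Fin.last d))) '' stairPath d (Fin.init a) (Fin.init b)) ⊆ S := by
      intro a ha b hb hab p hp
      rcases hp with hseg | him
      · obtain ⟨u, v, hu, hv, huv, hp⟩ := hseg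
        have hpl : p (Fin.last d) = u * a (Fin.last d) + v * b (Fin.last d) := by
          rw [← hp]; simp [Fin.snoc_last]
        have hpinit : Fin.init p = Fin.init a := by
          funext i
          rw [← hp]
          simp only [Fin.init, Pi.add_apply, Pi.smul_apply, smul_eq_mul, Fin.snoc_castSucc]
          linear_combination (a i.castSucc) * huv
        by_cases hcy : y < p (Fin.last d)
        · exact Or.inl hcy
        · push_neg at hcy
          refine Or.inr ⟨hcy, ?_⟩
          rw [hpinit]
          have hal : a (Fin.last d) ≤ p (Fin.last d) := by
            rw [hpl]
            have h1 : 0 ≤ v * (b (Fin.last d) - a (Fin.last d)) :=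
              mul_nonneg hv (sub_nonneg.2 hab)
            have h2 : u * a (Fin.last d) + v * b (Fin.last d) - a (Fin.last d) =
                v * (b (Fin.last d) - a (Fin.last d)) := by
              linear_combination (a (Fin.last d)) * huv
            linarith
          rcases ha with h | h
          · linarith
          · exact h.2
      · obtain ⟨w, hw, rfl⟩ := him
        by_cases hcy : y < b (Fin.last d)
        · exact Or.inl (by simpa [Fin.snoc_last] using hcy)
        · push_neg at hcy
          have hbm : Fin.init b ∈ sconv X' := (hb.resolve_left (not_lt.2 hcy)).2
          have ham : Fin.init a ∈ sconv X' :=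
            (ha.resolve_left (not_lt.2 (hab.trans hcy))).2
          refine Or.inr ⟨by simpa [Fin.snoc_last] using hcy, ?_⟩
          rw [Fin.init_snoc]
          exact stairConvex_sconv X' _ ham _ hbm hw
    have hSconv : StairConvex S := by
      intro a ha b hb
      simp only [stairPath]
      split_ifs with hab
      · exact key a ha b hb hab
      · exact key b hb a ha (le_of_not_ge hab)
    have hXS : X ⊆ S := by
      intro x hx
      by_cases hxy : y < x (Fin.last d)
      · exact Or.inl hxy
      · push_neg at hxy
        exact Or.inr ⟨hxy, subset_sconv X' ⟨x, ⟨hx, hxy⟩, rfl⟩⟩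
    intro z hz
    have hzS : Fin.snoc z y ∈ S := sconv_subset hSconv hXS hz
    rcases hzS with h | h
    · simp [Fin.snoc_last] at h
    · have := h.2
      rwa [Fin.init_snoc] at this
  · -- sconv X' ⊆ slice
    intro z hz
    rw [Set.mem_setOf_eq]
    refine Set.mem_sInter.2 fun S hS => ?_
    obtain ⟨hSc, hXS⟩ := hS
    set T : Set (Fin d → ℝ) := {w | Fin.snoc w y ∈ S} with hTdef
    have hT1 : StairConvex T := by
      intro a ha b hb p hp
      have kp : stairPath (d + 1) (Fin.snoc a y) (Fin.snoc b y) ⊆ S := hSc _ ha _ hb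
      apply kp
      simp only [stairPath, Fin.snoc_last, Fin.init_snoc, if_pos le_rfl]
      exact Or.inr ⟨p, hp, rfl⟩
    have hT2 : X' ⊆ T := by
      rintro w ⟨x, ⟨hxX, hxy⟩, rfl⟩
      have kp : stairPath (d + 1) x x₀ ⊆ S := hSc x (hXS hxX) x₀ (hXS hx₀X)
      apply kp
      simp only [stairPath, if_pos (hxy.trans hx₀y)]
      left
      have hseg : y ∈ segment ℝ (x (Fin.last d)) (x₀ (Fin.last d)) := by
        rw [segment_eq_Icc (hxy.trans hx₀y)]
        exact ⟨hxy, hx₀y⟩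
      obtain ⟨u, v, hu, hv, huv, huvy⟩ := hseg
      refine ⟨u, v, hu, hv, huv, ?_⟩
      funext i
      refine Fin.lastCases ?_ (fun i => ?_) i
      · simp only [Pi.add_apply, Pi.smul_apply, smul_eq_mul, Fin.snoc_last]
        simpa [smul_eq_mul] using huvy
      · simp only [Pi.add_apply, Pi.smul_apply, smul_eq_mul, Fin.snoc_castSucc, Fin.init]
        linear_combination (x i.castSucc) * huv
    exact sconv_subset hT1 hT2 hz
end

section
/- Let d ≥ 1 and 1 ≤ k ≤ d+1 be integers, let Q ⊂ ℝ^d be a set of k points, and let p ∈ sconv(Q). Then p shares at least d − k + 1 coordinates with Q; that is, the set of indices {i ∈ {1,…,d} : ∃ q ∈ Q with p_i = q_i} has at least d − k + 1 elements. -/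
open Classical in
noncomputable def stairHullSet : (d : ℕ) → Finset (Fin d → ℝ) → Set (Fin d → ℝ)
  | 0, _ => Set.univ
  | (d+1), Q => {p | (∃ q ∈ Q, q (Fin.last d) ≤ p (Fin.last d)) ∧
      (∃ q ∈ Q, p (Fin.last d) ≤ q (Fin.last d)) ∧
      Fin.init p ∈ stairHullSet d
        ((Q.filter (fun q => q (Fin.last d) ≤ p (Fin.last d))).image Fin.init) }

open Classical in
theorem stairHullSet_mono : ∀ (d : ℕ) (Q Q' : Finset (Fin d → ℝ)), Q ⊆ Q' →
    stairHullSet d Q ⊆ stairHullSet d Q'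
  | 0, _, _, _ => fun _ _ => trivial
  | (d+1), Q, Q', h => by
    intro p hp
    simp only [stairHullSet, Set.mem_setOf_eq] at hp ⊢
    obtain ⟨⟨q1, hq1, h1⟩, ⟨q2, hq2, h2⟩, hrec⟩ := hp
    exact ⟨⟨q1, h hq1, h1⟩, ⟨q2, h hq2, h2⟩,
      stairHullSet_mono d _ _ (Finset.image_subset_image (Finset.filter_subset_filter _ h)) hrec⟩

open Classical in
theorem stairHullSet_stairConvex : ∀ (d : ℕ) (Q : Finset (Fin d → ℝ)),
    StairConvex (stairHullSet d Q)
  | 0, _ => fun _ _ _ _ _ _ => trivial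
  | (d+1), Q => by
    have key : ∀ a b : Fin (d+1) → ℝ, a ∈ stairHullSet (d+1) Q → b ∈ stairHullSet (d+1) Q →
        a (Fin.last d) ≤ b (Fin.last d) →
        segment ℝ a (Fin.snoc (Fin.init a) (b (Fin.last d))) ∪
          (fun z => Fin.snoc z (b (Fin.last d))) '' stairPath d (Fin.init a) (Fin.init b) ⊆
          stairHullSet (d+1) Q := by
      intro a b ha hb hab z hz
      simp only [stairHullSet, Set.mem_setOf_eq] at ha hb ⊢
      obtain ⟨⟨q1, hq1, h1⟩, ⟨q2, hq2, h2⟩, harec⟩ := ha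
      obtain ⟨⟨q3, hq3, h3⟩, ⟨q4, hq4, h4⟩, hbrec⟩ := hb
      rcases hz with hz | hz
      · obtain ⟨u, v, hu, hv, huv, rfl⟩ := hz
        have hlast : (u • a + v • Fin.snoc (Fin.init a) (b (Fin.last d))) (Fin.last d)
            = u * a (Fin.last d) + v * b (Fin.last d) := by
          simp [Fin.snoc_last]
        have hinit : ∀ i : Fin d,
            (u • a + v • Fin.snoc (Fin.init a) (b (Fin.last d))) (Fin.castSucc i)
            = a (Fin.castSucc i) := by
          intro i
          simp only [Pi.add_apply, Pi.smul_apply, smul_eq_mul, Fin.snoc_castSucc, Fin.init]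
          linear_combination a i.castSucc * huv
        have hlow : a (Fin.last d) ≤ (u • a + v • Fin.snoc (Fin.init a) (b (Fin.last d))) (Fin.last d) := by
          rw [hlast]
          have h5 := mul_nonneg hv (sub_nonneg.mpr hab)
          have h6 : (u + v) * a (Fin.last d) = a (Fin.last d) := by rw [huv]; ring
          nlinarith [h5, h6]
        have hhigh : (u • a + v • Fin.snoc (Fin.init a) (b (Fin.last d))) (Fin.last d) ≤ b (Fin.last d) := by
          rw [hlast]
          have h5 := mul_nonneg hu (sub_nonneg.mpr hab)
          have h6 : (u + v) * b (Fin.last d) = b (Fin.last d) := by rw [huv]; ring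
          nlinarith [h5, h6]
        refine ⟨⟨q1, hq1, le_trans h1 hlow⟩, ⟨q4, hq4, le_trans hhigh h4⟩, ?_⟩
        have hinitfun : Fin.init (u • a + v • Fin.snoc (Fin.init a) (b (Fin.last d))) = Fin.init a := by
          funext i; exact hinit i
        rw [hinitfun]
        exact stairHullSet_mono d _ _
          (Finset.image_subset_image (Finset.monotone_filter_right Q (fun q _ hq => le_trans hq hlow)))
          harec
      · obtain ⟨z', hz', rfl⟩ := hz
        have hzlast : (Fin.snoc z' (b (Fin.last d)) : Fin (d+1) → ℝ) (Fin.last d) = b (Fin.last d) := by simp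
        have hzinit : Fin.init (Fin.snoc z' (b (Fin.last d)) : Fin (d+1) → ℝ) = z' := by simp
        simp only [hzlast, hzinit]
        refine ⟨⟨q3, hq3, h3⟩, ⟨q4, hq4, h4⟩, ?_⟩
        have ha3 : Fin.init a ∈ stairHullSet d
            ((Q.filter (fun q => q (Fin.last d) ≤ b (Fin.last d))).image Fin.init) :=
          stairHullSet_mono d _ _
            (Finset.image_subset_image (Finset.monotone_filter_right Q (fun q _ hq => le_trans hq hab)))
            harec
        exact stairHullSet_stairConvex d _ _ ha3 _ hbrec hz'
    intro a ha b hb z hz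
    rw [stairPath] at hz
    split_ifs at hz with hab
    · exact key a b ha hb hab hz
    · exact key b a hb ha (le_of_not_ge hab) hz

open Classical in
theorem subset_stairHullSet : ∀ (d : ℕ) (Q : Finset (Fin d → ℝ)),
    (↑Q : Set (Fin d → ℝ)) ⊆ stairHullSet d Q
  | 0, _ => fun _ _ => trivial
  | (d+1), Q => by
    intro q hq
    simp only [Finset.mem_coe] at hq
    simp only [stairHullSet, Set.mem_setOf_eq]
    refine ⟨⟨q, hq, le_refl _⟩, ⟨q, hq, le_refl _⟩, ?_⟩
    apply subset_stairHullSet d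
    simp only [Finset.coe_image, Set.mem_image, Finset.mem_coe, Finset.mem_filter]
    exact ⟨q, ⟨hq, le_refl _⟩, rfl⟩

open Classical in
theorem stairHullSet_card : ∀ (d : ℕ) (Q : Finset (Fin d → ℝ)), Q.Nonempty →
    ∀ p ∈ stairHullSet d Q,
    d + 1 ≤ (Finset.univ.filter (fun i : Fin d => ∃ q ∈ Q, p i = q i)).card + Q.card
  | 0, Q, hQ, p, _ => by
    have := Finset.card_pos.mpr hQ
    generalize (Finset.univ.filter (fun i : Fin 0 => ∃ q ∈ Q, p i = q i)).card = n
    omega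
  | (d+1), Q, hQ, p, hp => by
    simp only [stairHullSet, Set.mem_setOf_eq] at hp
    obtain ⟨⟨q1, hq1, h1⟩, ⟨q2, hq2, h2⟩, hrec⟩ := hp
    set Qt := Q.filter (fun q => q (Fin.last d) ≤ p (Fin.last d)) with hQt
    have hQtne : Qt.Nonempty := ⟨q1, Finset.mem_filter.mpr ⟨hq1, h1⟩⟩
    have hIH := stairHullSet_card d (Qt.image Fin.init) (hQtne.image _) _ hrec
    set G' := Finset.univ.filter
      (fun i : Fin d => ∃ q' ∈ Qt.image Fin.init, Fin.init p i = q' i) with hG'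
    set G := Finset.univ.filter (fun i : Fin (d+1) => ∃ q ∈ Q, p i = q i) with hG
    have hsub : G'.image Fin.castSucc ⊆ G := by
      intro i hi
      obtain ⟨j, hj, rfl⟩ := Finset.mem_image.mp hi
      obtain ⟨-, q', hq', he⟩ := Finset.mem_filter.mp hj
      obtain ⟨q, hqQt, rfl⟩ := Finset.mem_image.mp hq'
      refine Finset.mem_filter.mpr ⟨Finset.mem_univ _, q, Finset.mem_of_mem_filter q hqQt, ?_⟩
      exact he
    have hcard' : G'.card ≤ G.card := by
      rw [← Finset.card_image_of_injective G' (Fin.castSucc_injective d)]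
      exact Finset.card_le_card hsub
    have hQtQ : Qt.card ≤ Q.card := Finset.card_le_card (Finset.filter_subset _ _)
    have himg : (Qt.image Fin.init).card ≤ Qt.card := Finset.card_image_le
    by_cases hlastgood : ∃ q ∈ Q, p (Fin.last d) = q (Fin.last d)
    · have hlastG : Fin.last d ∈ G := Finset.mem_filter.mpr ⟨Finset.mem_univ _, hlastgood⟩
      have hins : insert (Fin.last d) (G'.image Fin.castSucc) ⊆ G := by
        intro i hi
        rcases Finset.mem_insert.mp hi with h | h
        · exact h ▸ hlastG
        · exact hsub h
      have hnot : Fin.last d ∉ G'.image Fin.castSucc := by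
        intro h
        obtain ⟨j, -, hj⟩ := Finset.mem_image.mp h
        exact absurd hj (Fin.castSucc_lt_last j).ne
      have hcard2 : G'.card + 1 ≤ G.card := by
        have := Finset.card_le_card hins
        rw [Finset.card_insert_of_notMem hnot,
          Finset.card_image_of_injective G' (Fin.castSucc_injective d)] at this
        omega
      omega
    · have hq2not : q2 ∉ Qt := by
        intro h
        obtain ⟨-, h'⟩ := Finset.mem_filter.mp h
        exact hlastgood ⟨q2, hq2, le_antisymm h2 h'⟩
      have hQtlt : Qt.card < Q.card :=
        Finset.card_lt_card ⟨Finset.filter_subset _ _, fun hss => hq2not (hss hq2)⟩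
      omega

open Classical in
/-- If `Q ⊂ ℝ^d` has `k ≤ d + 1` points and `p ∈ sconv Q`, then `p` shares at least
`d - k + 1` coordinates with `Q`. -/
theorem sconv_shares_coordinates (d k : ℕ) (hd : 1 ≤ d) (hk1 : 1 ≤ k) (hk2 : k ≤ d + 1)
    (Q : Finset (Fin d → ℝ)) (hQ : Q.card = k) (p : Fin d → ℝ)
    (hp : p ∈ sconv (↑Q : Set (Fin d → ℝ))) :
    d + 1 - k ≤ (Finset.univ.filter (fun i : Fin d => ∃ q ∈ Q, p i = q i)).card := by
  have hQne : Q.Nonempty := Finset.card_pos.mp (by omega)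
  have hpS : p ∈ stairHullSet d Q :=
    hp _ ⟨stairHullSet_stairConvex d Q, subset_stairHullSet d Q⟩
  have h := stairHullSet_card d Q hQne p hpS
  rw [hQ] at h
  generalize (Finset.univ.filter (fun i : Fin d => ∃ q ∈ Q, p i = q i)).card = n at h ⊢
  omega
end

section
/- Let d ≥ 1 be an integer and let P, Q ⊂ ℝ^d be finite point sets that do not share any coordinate, with |P| + |Q| ≥ d + 2. If sconv(P) ∩ sconv(Q) ≠ ∅, then there exist subsets P' ⊆ P and Q' ⊆ Q with |P'| + |Q'| = d + 2 such that sconv(P') ∩ sconv(Q') ≠ ∅. -/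
lemma stairPath_succ_of_le {d : ℕ} {a b : Fin (d+1) → ℝ} (h : a (Fin.last d) ≤ b (Fin.last d)) :
    stairPath (d+1) a b = segment ℝ a (Fin.snoc (Fin.init a) (b (Fin.last d))) ∪
      (fun z => Fin.snoc z (b (Fin.last d))) '' stairPath d (Fin.init a) (Fin.init b) := by
  rw [stairPath, if_pos h]

lemma stairPath_succ_of_not_le {d : ℕ} {a b : Fin (d+1) → ℝ} (h : ¬ a (Fin.last d) ≤ b (Fin.last d)) :
    stairPath (d+1) a b = segment ℝ b (Fin.snoc (Fin.init b) (a (Fin.last d))) ∪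
      (fun z => Fin.snoc z (a (Fin.last d))) '' stairPath d (Fin.init b) (Fin.init a) := by
  rw [stairPath, if_neg h]

lemma mem_sconv {d : ℕ} {X : Set (Fin d → ℝ)} {x : Fin d → ℝ} :
    x ∈ sconv X ↔ ∀ T : Set (Fin d → ℝ), StairConvex T → X ⊆ T → x ∈ T :=
  ⟨fun h T h1 h2 => Set.mem_sInter.1 h T ⟨h1, h2⟩,
   fun h T hT => h T hT.1 hT.2⟩

lemma sconv_min {d : ℕ} {X T : Set (Fin d → ℝ)} (hT : StairConvex T) (hXT : X ⊆ T) :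
    sconv X ⊆ T := fun _ hx => mem_sconv.1 hx T hT hXT

lemma sconv_mono {d : ℕ} {X Y : Set (Fin d → ℝ)} (h : X ⊆ Y) : sconv X ⊆ sconv Y :=
  fun _ hx => mem_sconv.2 fun T h1 h2 => mem_sconv.1 hx T h1 (h.trans h2)

lemma sconv_empty {d : ℕ} : sconv (∅ : Set (Fin d → ℝ)) = ∅ :=
  Set.eq_empty_of_subset_empty (sconv_min (fun _ ha => absurd ha (Set.notMem_empty _))
    (Set.empty_subset _))

lemma stairConvex_slice {d : ℕ} {T : Set (Fin (d+1) → ℝ)} (hT : StairConvex T) (c : ℝ) :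
    StairConvex {y : Fin d → ℝ | Fin.snoc y c ∈ T} := by
  intro a ha b hb w hw
  refine hT _ ha _ hb (show Fin.snoc w c ∈ stairPath (d+1) (Fin.snoc a c) (Fin.snoc b c) from ?_)
  rw [stairPath_succ_of_le (by simp)]
  simp only [Fin.snoc_last, Fin.init_snoc]
  exact Or.inr ⟨w, hw, rfl⟩

lemma vertical_mem {d : ℕ} {T : Set (Fin (d+1) → ℝ)} (hT : StairConvex T)
    {a b : Fin (d+1) → ℝ} (ha : a ∈ T) (hb : b ∈ T)
    (hab : a (Fin.last d) ≤ b (Fin.last d)) {t : ℝ}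
    (h1 : a (Fin.last d) ≤ t) (h2 : t ≤ b (Fin.last d)) :
    Fin.snoc (Fin.init a) t ∈ T := by
  apply hT a ha b hb
  rw [stairPath_succ_of_le hab]
  left
  rcases eq_or_lt_of_le hab with heq | hlt
  · have ht : t = a (Fin.last d) := le_antisymm (heq ▸ h2) h1
    rw [ht, Fin.snoc_init_self]
    exact left_mem_segment ℝ a _
  · set al := a (Fin.last d)
    set bl := b (Fin.last d)
    set s := (t - al) / (bl - al) with hs
    have hba : (0:ℝ) < bl - al := sub_pos.2 hlt
    have hs0 : 0 ≤ s := div_nonneg (by linarith) hba.le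
    have hs1 : s ≤ 1 := by
      rw [hs, div_le_one hba]; linarith
    refine ⟨1 - s, s, by linarith, hs0, by ring, ?_⟩
    have hmul : s * (bl - al) = t - al := div_mul_cancel₀ _ hba.ne'
    funext i
    induction i using Fin.lastCases with
    | last =>
      simp only [Pi.add_apply, Pi.smul_apply, smul_eq_mul, Fin.snoc_last]
      linear_combination hmul
    | cast i =>
      simp only [Pi.add_apply, Pi.smul_apply, smul_eq_mul, Fin.snoc_castSucc]
      show (1 - s) * a (Fin.castSucc i) + s * Fin.init a i = Fin.init a i
      simp only [Fin.init]
      ring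

noncomputable def levelHull {d : ℕ} (X : Finset (Fin (d+1) → ℝ)) (t : ℝ) : Set (Fin d → ℝ) :=
  sconv ↑((X.filter fun p => p (Fin.last d) ≤ t).image Fin.init)

lemma levelHull_mono {d : ℕ} (X : Finset (Fin (d+1) → ℝ)) {t t' : ℝ} (h : t ≤ t') :
    levelHull X t ⊆ levelHull X t' := by
  apply sconv_mono
  apply Finset.coe_subset.2
  apply Finset.image_subset_image
  intro p hp
  rw [Finset.mem_filter] at hp ⊢
  exact ⟨hp.1, hp.2.trans h⟩

lemma levelHull_def {d : ℕ} (X : Finset (Fin (d+1) → ℝ)) (t : ℝ) :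
    levelHull X t =
      sconv (↑((X.filter fun p => p (Fin.last d) ≤ t).image Fin.init) : Set (Fin d → ℝ)) := rfl

lemma stairConvex_levelHull {d : ℕ} (X : Finset (Fin (d+1) → ℝ)) (t : ℝ) :
    StairConvex (levelHull X t) := stairConvex_sconv _

lemma stairConvex_aux {d : ℕ} (X : Finset (Fin (d+1) → ℝ)) :
    StairConvex {x : Fin (d+1) → ℝ |
      (∃ q ∈ X, x (Fin.last d) ≤ q (Fin.last d)) ∧
      Fin.init x ∈ levelHull X (x (Fin.last d))} := by
  set S := {x : Fin (d+1) → ℝ |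
      (∃ q ∈ X, x (Fin.last d) ≤ q (Fin.last d)) ∧
      Fin.init x ∈ levelHull X (x (Fin.last d))} with hS
  have main : ∀ a ∈ S, ∀ b ∈ S, a (Fin.last d) ≤ b (Fin.last d) →
      (segment ℝ a (Fin.snoc (Fin.init a) (b (Fin.last d))) ∪
        (fun z => Fin.snoc z (b (Fin.last d))) '' stairPath d (Fin.init a) (Fin.init b)) ⊆ S := by
    intro a ha b hb hab w hw
    obtain ⟨q, hqX, hbq⟩ := hb.1
    rcases hw with hseg | ⟨z, hz, rfl⟩
    · obtain ⟨u, v, hu, hv, huv, rfl⟩ := hseg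
      have hlastw : (u • a + v • (Fin.snoc (Fin.init a) (b (Fin.last d)) : Fin (d+1) → ℝ))
          (Fin.last d) = u * a (Fin.last d) + v * b (Fin.last d) := by
        simp [Fin.snoc_last]
      have keya : (u + v) * a (Fin.last d) = a (Fin.last d) := by rw [huv, one_mul]
      have keyb : (u + v) * b (Fin.last d) = b (Fin.last d) := by rw [huv, one_mul]
      have hwlo : a (Fin.last d) ≤ u * a (Fin.last d) + v * b (Fin.last d) := by
        nlinarith [mul_nonneg hv (sub_nonneg.2 hab), keya]
      have hwhi : u * a (Fin.last d) + v * b (Fin.last d) ≤ b (Fin.last d) := by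
        nlinarith [mul_nonneg hu (sub_nonneg.2 hab), keyb]
      have hinitw : Fin.init (u • a + v • (Fin.snoc (Fin.init a) (b (Fin.last d)) : Fin (d+1) → ℝ))
          = Fin.init a := by
        funext i
        show (u • a + v • (Fin.snoc (Fin.init a) (b (Fin.last d)) : Fin (d+1) → ℝ))
            (Fin.castSucc i) = a (Fin.castSucc i)
        simp only [Pi.add_apply, Pi.smul_apply, smul_eq_mul, Fin.snoc_castSucc]
        show u * a (Fin.castSucc i) + v * Fin.init a i = a (Fin.castSucc i)
        simp only [Fin.init]
        linear_combination a (Fin.castSucc i) * huv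
      constructor
      · exact ⟨q, hqX, by rw [hlastw]; exact hwhi.trans hbq⟩
      · rw [hinitw, hlastw]
        exact levelHull_mono X hwlo ha.2
    · constructor
      · exact ⟨q, hqX, by simp only [Fin.snoc_last]; exact hbq⟩
      · show Fin.init (Fin.snoc z (b (Fin.last d)) : Fin (d+1) → ℝ) ∈
          levelHull X ((Fin.snoc z (b (Fin.last d)) : Fin (d+1) → ℝ) (Fin.last d))
        rw [Fin.snoc_last, Fin.init_snoc]
        exact stairConvex_levelHull X (b (Fin.last d)) _ (levelHull_mono X hab ha.2) _ hb.2 hz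
  intro a ha b hb w hw
  by_cases h : a (Fin.last d) ≤ b (Fin.last d)
  · refine main a ha b hb h ?_
    rwa [stairPath_succ_of_le h] at hw
  · refine main b hb a ha (le_of_not_ge h) ?_
    rwa [stairPath_succ_of_not_le h] at hw

lemma mem_sconv_iff {d : ℕ} (X : Finset (Fin (d+1) → ℝ)) (x : Fin (d+1) → ℝ) :
    x ∈ sconv (↑X : Set (Fin (d+1) → ℝ)) ↔
      (∃ q ∈ X, x (Fin.last d) ≤ q (Fin.last d)) ∧
      Fin.init x ∈ levelHull X (x (Fin.last d)) := by
  constructor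
  · intro hx
    refine sconv_min (stairConvex_aux X) ?_ hx
    intro p hp
    refine ⟨⟨p, Finset.mem_coe.1 hp, le_rfl⟩, ?_⟩
    apply subset_sconv
    exact Finset.mem_coe.2 (Finset.mem_image_of_mem _
      (Finset.mem_filter.2 ⟨Finset.mem_coe.1 hp, le_rfl⟩))
  · rintro ⟨⟨q, hqX, hxq⟩, hinit⟩
    rw [mem_sconv]
    intro T hT hXT
    have hslice : StairConvex {y : Fin d → ℝ | Fin.snoc y (x (Fin.last d)) ∈ T} :=
      stairConvex_slice hT _
    have hsub : (↑((X.filter fun p => p (Fin.last d) ≤ x (Fin.last d)).image Fin.init) :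
        Set (Fin d → ℝ)) ⊆ {y : Fin d → ℝ | Fin.snoc y (x (Fin.last d)) ∈ T} := by
      rintro y hy
      obtain ⟨p, hp, rfl⟩ := Finset.mem_image.1 (Finset.mem_coe.1 hy)
      obtain ⟨hpX, hpx⟩ := Finset.mem_filter.1 hp
      exact vertical_mem hT (hXT (Finset.mem_coe.2 hpX)) (hXT (Finset.mem_coe.2 hqX))
        (hpx.trans hxq) hpx hxq
    have := sconv_min hslice hsub hinit
    simpa [Fin.snoc_init_self] using this

lemma exists_lift {α β : Type*} [DecidableEq α] [DecidableEq β] (f : β → α) (t : Finset β) :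
    ∀ s : Finset α, s ⊆ t.image f → ∃ u : Finset β, u ⊆ t ∧ u.image f = s ∧ u.card ≤ s.card := by
  intro s
  induction s using Finset.induction_on with
  | empty => exact fun _ => ⟨∅, by simp⟩
  | @insert a s ha ih =>
    intro h
    obtain ⟨u, hu1, hu2, hu3⟩ := ih (fun x hx => h (Finset.mem_insert_of_mem hx))
    obtain ⟨b, hb, hfb⟩ := Finset.mem_image.1 (h (Finset.mem_insert_self a s))
    refine ⟨insert b u, Finset.insert_subset hb hu1, ?_, ?_⟩
    · rw [Finset.image_insert, hfb, hu2]
    · calc (insert b u).card ≤ u.card + 1 := Finset.card_insert_le _ _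
        _ ≤ s.card + 1 := by omega
        _ = (insert a s).card := (Finset.card_insert_of_notMem ha).symm

lemma key (d : ℕ) : ∀ P Q : Finset (Fin d → ℝ),
    (∀ i : Fin d, ∀ p ∈ P, ∀ q ∈ Q, p i ≠ q i) →
    (sconv (↑P : Set (Fin d → ℝ)) ∩ sconv (↑Q : Set (Fin d → ℝ))).Nonempty →
    ∃ P' ⊆ P, ∃ Q' ⊆ Q, P'.Nonempty ∧ Q'.Nonempty ∧ P'.card + Q'.card ≤ d + 2 ∧
      (sconv (↑P' : Set (Fin d → ℝ)) ∩ sconv (↑Q' : Set (Fin d → ℝ))).Nonempty := by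
  induction d with
  | zero =>
    intro P Q _ ⟨x, hxP, hxQ⟩
    have hPne : P.Nonempty := by
      rcases P.eq_empty_or_nonempty with h | h
      · rw [h] at hxP; rw [Finset.coe_empty, sconv_empty] at hxP; exact absurd hxP (Set.notMem_empty x)
      · exact h
    have hQne : Q.Nonempty := by
      rcases Q.eq_empty_or_nonempty with h | h
      · rw [h] at hxQ; rw [Finset.coe_empty, sconv_empty] at hxQ; exact absurd hxQ (Set.notMem_empty x)
      · exact h
    obtain ⟨p, hp⟩ := hPne
    obtain ⟨q, hq⟩ := hQne
    have hpq : p = q := funext fun i => i.elim0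
    refine ⟨{p}, Finset.singleton_subset_iff.2 hp, {q}, Finset.singleton_subset_iff.2 hq,
      Finset.singleton_nonempty _, Finset.singleton_nonempty _, by simp, ⟨p, ?_, ?_⟩⟩
    · exact subset_sconv _ (by simp)
    · exact subset_sconv _ (by simp [hpq])
  | succ d ih =>
    intro P Q hshare ⟨x, hxP, hxQ⟩
    rw [mem_sconv_iff] at hxP hxQ
    obtain ⟨⟨pm, hpmP, hpmL⟩, hxP'⟩ := hxP
    obtain ⟨⟨qm, hqmQ, hqmL⟩, hxQ'⟩ := hxQ
    set L := x (Fin.last d) with hLdef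
    set P0 := P.filter (fun p => p (Fin.last d) ≤ L) with hP0
    set Q0 := Q.filter (fun p => p (Fin.last d) ≤ L) with hQ0
    have hshare' : ∀ i : Fin d, ∀ a ∈ P0.image Fin.init, ∀ b ∈ Q0.image Fin.init, a i ≠ b i := by
      intro i a ha b hb
      obtain ⟨p, hp, rfl⟩ := Finset.mem_image.1 ha
      obtain ⟨q, hq, rfl⟩ := Finset.mem_image.1 hb
      exact hshare i.castSucc p (Finset.filter_subset _ _ hp) q (Finset.filter_subset _ _ hq)
    have hx1 : Fin.init x ∈ sconv (↑(P0.image Fin.init) : Set (Fin d → ℝ)) := hxP'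
    have hx2 : Fin.init x ∈ sconv (↑(Q0.image Fin.init) : Set (Fin d → ℝ)) := hxQ'
    obtain ⟨A1, hA1, B1, hB1, hA1ne, hB1ne, hcard1, y, hyA, hyB⟩ :=
      ih _ _ hshare' ⟨Fin.init x, Set.mem_inter hx1 hx2⟩
    obtain ⟨A, hAP0, hAim, hAcard⟩ := exists_lift Fin.init P0 A1 hA1
    obtain ⟨B, hBQ0, hBim, hBcard⟩ := exists_lift Fin.init Q0 B1 hB1
    have hAne : A.Nonempty := by
      obtain ⟨a1, ha1⟩ := hA1ne
      rw [← hAim] at ha1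
      obtain ⟨a, ha, _⟩ := Finset.mem_image.1 ha1
      exact ⟨a, ha⟩
    have hBne : B.Nonempty := by
      obtain ⟨b1, hb1⟩ := hB1ne
      rw [← hBim] at hb1
      obtain ⟨b, hb, _⟩ := Finset.mem_image.1 hb1
      exact ⟨b, hb⟩
    have hAP : A ⊆ P := hAP0.trans (Finset.filter_subset _ _)
    have hBQ : B ⊆ Q := hBQ0.trans (Finset.filter_subset _ _)
    obtain ⟨amax, hamaxA, hamax⟩ := Finset.exists_mem_eq_sup' hAne (fun p => p (Fin.last d))
    obtain ⟨bmax, hbmaxB, hbmax⟩ := Finset.exists_mem_eq_sup' hBne (fun p => p (Fin.last d))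
    have hAbound : ∀ a ∈ A, a (Fin.last d) ≤ amax (Fin.last d) :=
      fun a ha => hamax ▸ Finset.le_sup' (fun p => p (Fin.last d)) ha
    have hBbound : ∀ b ∈ B, b (Fin.last d) ≤ bmax (Fin.last d) :=
      fun b hb => hbmax ▸ Finset.le_sup' (fun p => p (Fin.last d)) hb
    have hMAL : amax (Fin.last d) ≤ L := (Finset.mem_filter.1 (hAP0 hamaxA)).2
    have hMBL : bmax (Fin.last d) ≤ L := (Finset.mem_filter.1 (hBQ0 hbmaxB)).2
    have hMAB : amax (Fin.last d) ≠ bmax (Fin.last d) :=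
      hshare (Fin.last d) amax (hAP hamaxA) bmax (hBQ hbmaxB)
    have hcardA := Finset.card_le_card hA1
    have hcardB := Finset.card_le_card hB1
    rcases (Ne.lt_or_gt hMAB) with hlt | hlt
    · -- augment the P side with pm
      have hpm2 : bmax (Fin.last d) < pm (Fin.last d) :=
        lt_of_le_of_ne (hMBL.trans hpmL)
          (fun h => hshare (Fin.last d) pm hpmP bmax (hBQ hbmaxB) h.symm)
      have m1 : Fin.snoc y (bmax (Fin.last d)) ∈
          sconv (↑(insert pm A) : Set (Fin (d+1) → ℝ)) := by
        rw [mem_sconv_iff]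
        refine ⟨⟨pm, Finset.mem_insert_self _ _, ?_⟩, ?_⟩
        · rw [Fin.snoc_last]; exact hpm2.le
        · rw [Fin.init_snoc, Fin.snoc_last, levelHull_def]
          have hfil : (insert pm A).filter (fun p => p (Fin.last d) ≤ bmax (Fin.last d)) = A := by
            rw [Finset.filter_insert, if_neg (not_le.2 hpm2)]
            exact Finset.filter_eq_self.2 (fun a ha => (hAbound a ha).trans hlt.le)
          rw [hfil, hAim]
          exact hyA
      have m2 : Fin.snoc y (bmax (Fin.last d)) ∈ sconv (↑B : Set (Fin (d+1) → ℝ)) := by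
        rw [mem_sconv_iff]
        refine ⟨⟨bmax, hbmaxB, ?_⟩, ?_⟩
        · rw [Fin.snoc_last]
        · rw [Fin.init_snoc, Fin.snoc_last, levelHull_def]
          have hfil : B.filter (fun p => p (Fin.last d) ≤ bmax (Fin.last d)) = B :=
            Finset.filter_eq_self.2 hBbound
          rw [hfil, hBim]
          exact hyB
      refine ⟨insert pm A, Finset.insert_subset hpmP hAP, B, hBQ,
        Finset.insert_nonempty _ _, hBne, ?_,
        ⟨Fin.snoc y (bmax (Fin.last d)), Set.mem_inter m1 m2⟩⟩
      have := Finset.card_insert_le pm A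
      omega
    · -- augment the Q side with qm
      have hqm2 : amax (Fin.last d) < qm (Fin.last d) :=
        lt_of_le_of_ne (hMAL.trans hqmL)
          (fun h => hshare (Fin.last d) amax (hAP hamaxA) qm hqmQ h)
      have m1 : Fin.snoc y (amax (Fin.last d)) ∈ sconv (↑A : Set (Fin (d+1) → ℝ)) := by
        rw [mem_sconv_iff]
        refine ⟨⟨amax, hamaxA, ?_⟩, ?_⟩
        · rw [Fin.snoc_last]
        · rw [Fin.init_snoc, Fin.snoc_last, levelHull_def]
          have hfil : A.filter (fun p => p (Fin.last d) ≤ amax (Fin.last d)) = A :=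
            Finset.filter_eq_self.2 hAbound
          rw [hfil, hAim]
          exact hyA
      have m2 : Fin.snoc y (amax (Fin.last d)) ∈
          sconv (↑(insert qm B) : Set (Fin (d+1) → ℝ)) := by
        rw [mem_sconv_iff]
        refine ⟨⟨qm, Finset.mem_insert_self _ _, ?_⟩, ?_⟩
        · rw [Fin.snoc_last]; exact hqm2.le
        · rw [Fin.init_snoc, Fin.snoc_last, levelHull_def]
          have hfil : (insert qm B).filter (fun p => p (Fin.last d) ≤ amax (Fin.last d)) = B := by
            rw [Finset.filter_insert, if_neg (not_le.2 hqm2)]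
            exact Finset.filter_eq_self.2 (fun b hb => (hBbound b hb).trans hlt.le)
          rw [hfil, hBim]
          exact hyB
      refine ⟨A, hAP, insert qm B, Finset.insert_subset hqmQ hBQ,
        hAne, Finset.insert_nonempty _ _, ?_,
        ⟨Fin.snoc y (amax (Fin.last d)), Set.mem_inter m1 m2⟩⟩
      have := Finset.card_insert_le qm B
      omega

/-- A Kirchberger-type theorem for stair-convexity: if `P, Q ⊂ ℝ^d` share no coordinate,
`|P| + |Q| ≥ d + 2`, and their stair-convex hulls intersect, then there are subsets
`P' ⊆ P`, `Q' ⊆ Q` with `|P'| + |Q'| = d + 2` whose stair-convex hulls intersect. -/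
theorem sconv_kirchberger (d : ℕ) (hd : 1 ≤ d) (P Q : Finset (Fin d → ℝ))
    (hshare : ∀ i : Fin d, ∀ p ∈ P, ∀ q ∈ Q, p i ≠ q i)
    (hcard : d + 2 ≤ P.card + Q.card)
    (hne : (sconv (↑P : Set (Fin d → ℝ)) ∩ sconv (↑Q : Set (Fin d → ℝ))).Nonempty) :
    ∃ P' ⊆ P, ∃ Q' ⊆ Q, P'.card + Q'.card = d + 2 ∧
      (sconv (↑P' : Set (Fin d → ℝ)) ∩ sconv (↑Q' : Set (Fin d → ℝ))).Nonempty := by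
  obtain ⟨P1, hP1, Q1, hQ1, hP1ne, hQ1ne, hcard1, w, hw1, hw2⟩ := key d P Q hshare hne
  have hP1card : P1.card ≤ P.card := Finset.card_le_card hP1
  have hQ1card : Q1.card ≤ Q.card := Finset.card_le_card hQ1
  set n := min P.card (d + 2 - Q1.card) with hn
  have hn1 : n ≤ d + 2 - Q1.card := min_le_right _ _
  have hn2 : n ≤ P.card := min_le_left _ _
  have hP1n : P1.card ≤ n := le_min hP1card (by omega)
  obtain ⟨P', hP1P', hP'P, hP'card⟩ := Finset.exists_subsuperset_card_eq hP1 hP1n hn2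
  have h3 : Q1.card ≤ d + 2 - n := by omega
  have h4 : d + 2 - n ≤ Q.card := by
    rcases le_total P.card (d + 2 - Q1.card) with h | h
    · have : n = P.card := min_eq_left h
      omega
    · have : n = d + 2 - Q1.card := min_eq_right h
      omega
  obtain ⟨Q', hQ1Q', hQ'Q, hQ'card⟩ := Finset.exists_subsuperset_card_eq hQ1 h3 h4
  refine ⟨P', hP'P, Q', hQ'Q, by omega, ⟨w, Set.mem_inter ?_ ?_⟩⟩
  · exact sconv_mono (Finset.coe_subset.2 hP1P') hw1
  · exact sconv_mono (Finset.coe_subset.2 hQ1Q') hw2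
end

section
/- Let d ≥ 1 and m ≥ 2 be integers, let S ⊆ [0,1]^d be a stair-convex set, and let g_S = |S ∩ Gu(m)| be the number of points of the uniform grid contained in S. Then |g_S − (m−1)^d · vol(S)| ≤ d · m^{d−1}, where vol denotes Lebesgue (outer) measure. -/
open Classical in
/-- The uniform grid `Gu(m) = {0, 1/(m-1), …, 1}^d` as a finite set. -/
noncomputable def uniformGrid (d m : ℕ) : Finset (Fin d → ℝ) :=
  (Finset.univ : Finset (Fin d → Fin m)).image (fun f i => (f i : ℝ) / (m - 1))

namespace StairProofAux

open MeasureTheory Set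

variable {n : ℕ}

/-- Slice of a set at last coordinate `t`. -/
def slice (S : Set (Fin (n+1) → ℝ)) (t : ℝ) : Set (Fin n → ℝ) :=
  {x | Fin.snoc x t ∈ S}

/-- Cylinder set. -/
def cyl (A : Set (Fin n → ℝ)) (I : Set ℝ) : Set (Fin (n+1) → ℝ) :=
  {f | f (Fin.last n) ∈ I ∧ Fin.init f ∈ A}

lemma snoc_comb (x : Fin n → ℝ) {s t u a b : ℝ} (hab : a + b = 1) (hu : a*s + b*t = u) :
    a • (Fin.snoc x s : Fin (n+1) → ℝ) + b • (Fin.snoc x t : Fin (n+1) → ℝ)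
      = (Fin.snoc x u : Fin (n+1) → ℝ) := by
  funext i
  refine Fin.lastCases ?_ (fun i => ?_) i
  · simpa [Fin.snoc_last] using hu
  · simp only [Pi.add_apply, Pi.smul_apply, Fin.snoc_castSucc, smul_eq_mul]
    linear_combination (x i) * hab

lemma snoc_mem_segment (x : Fin n → ℝ) {s u t : ℝ} (h1 : s ≤ u) (h2 : u ≤ t) :
    (Fin.snoc x u : Fin (n+1) → ℝ) ∈ segment ℝ (Fin.snoc x s : Fin (n+1) → ℝ) (Fin.snoc x t : Fin (n+1) → ℝ) := by
  rcases eq_or_lt_of_le (h1.trans h2) with h | h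
  · have hu : u = s := le_antisymm (h ▸ h2) h1
    subst hu
    exact left_mem_segment ℝ _ _
  · have hts : t - s ≠ 0 := ne_of_gt (by linarith)
    have hab : (t-u)/(t-s) + (u-s)/(t-s) = 1 := by field_simp; ring
    have hu' : (t-u)/(t-s) * s + (u-s)/(t-s) * t = u := by field_simp; ring
    exact ⟨(t-u)/(t-s), (u-s)/(t-s), div_nonneg (by linarith) (by linarith),
      div_nonneg (by linarith) (by linarith), hab, snoc_comb x hab hu'⟩

/-- Lifting lemma : if `snoc x s ∈ S` and some point of `S` has last coordinate `≥ u ≥ s`,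
then `snoc x u ∈ S`. -/
lemma lift_mem {S : Set (Fin (n+1) → ℝ)} (hsc : StairConvex S)
    {x : Fin n → ℝ} {s u : ℝ} {p : Fin (n+1) → ℝ}
    (hx : Fin.snoc x s ∈ S) (hp : p ∈ S) (hsu : s ≤ u) (hup : u ≤ p (Fin.last n)) :
    Fin.snoc x u ∈ S := by
  have hpath := hsc _ hx _ hp
  have hcond : (Fin.snoc x s : Fin (n+1) → ℝ) (Fin.last n) ≤ p (Fin.last n) := by
    simp only [Fin.snoc_last]; linarith
  rw [stairPath, if_pos hcond] at hpath
  apply hpath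
  left
  have : Fin.init (Fin.snoc x s : Fin (n+1) → ℝ) = x := Fin.init_snoc _ _
  rw [this]
  exact snoc_mem_segment x hsu hup

lemma stairConvex_slice {S : Set (Fin (n+1) → ℝ)} (hsc : StairConvex S) (t : ℝ) :
    StairConvex (slice S t) := by
  intro a ha b hb z hz
  have hpath := hsc _ ha _ hb
  have hcond : (Fin.snoc a t : Fin (n+1) → ℝ) (Fin.last n) ≤
      (Fin.snoc b t : Fin (n+1) → ℝ) (Fin.last n) := by simp
  rw [stairPath, if_pos hcond] at hpath
  apply hpath
  right
  refine ⟨z, ?_, by simp⟩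
  simpa [Fin.init_snoc] using hz

lemma slice_subset_Icc {S : Set (Fin (n+1) → ℝ)} (hS : S ⊆ Set.Icc 0 1) (t : ℝ) :
    slice S t ⊆ Set.Icc 0 1 := by
  intro x hx
  obtain ⟨h0, h1⟩ := hS hx
  constructor
  · intro i
    have := h0 (Fin.castSucc i)
    simpa [Fin.snoc_castSucc] using this
  · intro i
    have := h1 (Fin.castSucc i)
    simpa [Fin.snoc_castSucc] using this

lemma volume_cyl (A : Set (Fin n → ℝ)) (I : Set ℝ) :
    volume (cyl A I) = volume I * volume A := by
  set e := MeasurableEquiv.piFinSuccAbove (fun _ : Fin (n+1) => ℝ) (Fin.last n) with he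
  have hpres : MeasurePreserving e volume volume :=
    volume_preserving_piFinSuccAbove (fun _ : Fin (n+1) => ℝ) (Fin.last n)
  have key : cyl A I = e ⁻¹' (I ×ˢ A) := by
    ext f
    have h2 : (e f).2 = Fin.init f := by
      funext j
      simp [he, MeasurableEquiv.piFinSuccAbove, Fin.succAbove_last, Fin.init]
    have h1 : (e f).1 = f (Fin.last n) := by
      simp [he, MeasurableEquiv.piFinSuccAbove]
    simp [cyl, Set.mem_preimage, Set.mem_prod, h1, h2]
  rw [key, ← MeasurableEquiv.map_apply e, hpres.map_eq, MeasureTheory.Measure.volume_eq_prod,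
    MeasureTheory.Measure.prod_prod]

lemma measure_partition {α : Type*} [MeasurableSpace α] (μ : Measure α)
    (E : ℕ → Set α) (hE : ∀ j, MeasurableSet (E j))
    (hdisj : ∀ i j, i ≠ j → Disjoint (E i) (E j)) :
    ∀ (k : ℕ) (T : Set α), T ⊆ (⋃ j < k, E j) → μ T = ∑ j ∈ Finset.range k, μ (T ∩ E j) := by
  intro k
  induction k with
  | zero => intro T hT; simp only [Finset.range_zero, Finset.sum_empty]
            apply measure_mono_null hT; simp
  | succ k ih =>
    intro T hT
    have h1 : μ (T ∩ E k) + μ (T \ E k) = μ T := measure_inter_add_diff T (hE k)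
    have h2 : T \ E k ⊆ ⋃ j < k, E j := by
      intro x hx
      obtain ⟨hxT, hxE⟩ := hx
      have := hT hxT
      simp only [Set.mem_iUnion] at this ⊢
      obtain ⟨j, hj, hxj⟩ := this
      rcases Nat.lt_succ_iff_lt_or_eq.mp hj with hj' | rfl
      · exact ⟨j, hj', hxj⟩
      · exact absurd hxj hxE
    have h3 : ∀ j < k, (T \ E k) ∩ E j = T ∩ E j := by
      intro j hj
      ext x
      simp only [Set.mem_inter_iff, Set.mem_diff]
      constructor
      · rintro ⟨⟨h, _⟩, h'⟩; exact ⟨h, h'⟩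
      · rintro ⟨h, h'⟩
        refine ⟨⟨h, fun hk => ?_⟩, h'⟩
        exact Set.disjoint_left.mp (hdisj j k (Nat.ne_of_lt hj)) h' hk
    rw [Finset.sum_range_succ, ← h1, ih (T \ E k) h2, add_comm]
    congr 1
    apply Finset.sum_congr rfl
    intro j hj
    rw [h3 j (Finset.mem_range.mp hj)]


lemma vol_Icc_one (k : ℕ) : volume (Set.Icc (0 : Fin k → ℝ) 1) = 1 := by
  rw [Real.volume_Icc_pi]
  simp

lemma vol_le_one {k : ℕ} {A : Set (Fin k → ℝ)} (hA : A ⊆ Set.Icc 0 1) : volume A ≤ 1 := by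
  calc volume A ≤ volume (Set.Icc (0 : Fin k → ℝ) 1) := measure_mono hA
  _ = 1 := vol_Icc_one k

lemma init_mem_Icc {S : Set (Fin (n+1) → ℝ)} (hS : S ⊆ Set.Icc 0 1)
    {g : Fin (n+1) → ℝ} (hg : g ∈ S) : Fin.init g ∈ Set.Icc (0 : Fin n → ℝ) 1 := by
  obtain ⟨h0, h1⟩ := hS hg
  exact ⟨fun i => h0 (Fin.castSucc i), fun i => h1 (Fin.castSucc i)⟩

/-- Abstract Riemann-sum style estimate. -/
lemma sum_estimate (N : ℕ) (f v : ℕ → ℝ) (V : ℝ) (good : ℕ → Prop)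
    (hf0 : ∀ j, 0 ≤ f j) (hf1 : ∀ j, f j ≤ 1) (hv0 : ∀ j, 0 ≤ v j)
    (hV : V = ∑ j ∈ Finset.range N, v j)
    (hgmono : ∀ i j, i ≤ j → good j → good i)
    (hL : ∀ j, j < N → good (j+1) → f j ≤ v j)
    (hU : ∀ j, j < N → good (j+1) → v j ≤ f (j+1))
    (hC : ∀ j, j < N → v j ≤ 1)
    (hfz : ∀ j, ¬ good j → f j = 0)
    (hvz : ∀ j, j < N → ¬ good j → v j = 0)
    (h0 : good 0 ∨ ((∀ j, f j = 0) ∧ V = 0)) :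
    |(∑ j ∈ Finset.range (N+1), f j) - V| ≤ 1 := by
  classical
  rcases h0 with hg0 | ⟨hfz', hV0⟩
  swap
  · rw [hV0, Finset.sum_eq_zero (fun j _ => hfz' j)]
    simp
  by_cases hgN : good N
  · have hgall : ∀ j, j < N → good (j+1) := fun j hj => hgmono _ N hj hgN
    have hup : V ≤ ∑ j ∈ Finset.range N, f (j+1) := by
      rw [hV]; exact Finset.sum_le_sum (fun j hj => hU j (Finset.mem_range.mp hj)
        (hgall j (Finset.mem_range.mp hj)))
    have hlo : (∑ j ∈ Finset.range N, f j) ≤ V := by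
      rw [hV]; exact Finset.sum_le_sum (fun j hj => hL j (Finset.mem_range.mp hj)
        (hgall j (Finset.mem_range.mp hj)))
    have e1 : ∑ j ∈ Finset.range (N+1), f j = (∑ j ∈ Finset.range N, f (j+1)) + f 0 :=
      Finset.sum_range_succ' f N
    have e2 : ∑ j ∈ Finset.range (N+1), f j = (∑ j ∈ Finset.range N, f j) + f N :=
      Finset.sum_range_succ f N
    rw [abs_le]
    constructor
    · linarith [hf0 0]
    · linarith [hf1 N]
  · have hex : ∃ j, ¬ good j := ⟨N, hgN⟩
    set j1 := Nat.find hex with hj1def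
    have hbad1 : ¬ good j1 := Nat.find_spec hex
    have hj1pos : j1 ≠ 0 := by
      intro h
      rw [h] at hbad1
      exact hbad1 hg0
    have hj1N : j1 ≤ N := Nat.find_min' hex hgN
    set j0 := j1 - 1 with hj0def
    have hj01 : j1 = j0 + 1 := by omega
    have hj0N : j0 < N := by omega
    have hgood_le : ∀ k, k ≤ j0 → good k := by
      intro k hk
      by_contra hkb
      exact absurd (Nat.find_min' hex hkb) (by omega)
    have hbad : ∀ k, j0 + 1 ≤ k → ¬ good k := by
      intro k hk hgk
      exact hbad1 (hgmono j1 k (by omega) hgk)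
    have hVeq : V = (∑ j ∈ Finset.range j0, v j) + v j0 := by
      rw [hV, ← Finset.sum_range_succ]
      symm
      apply Finset.sum_subset (Finset.range_subset_range.mpr (by omega))
      intro x hx hnx
      exact hvz x (Finset.mem_range.mp hx) (hbad x (by simp only [Finset.mem_range] at hnx; omega))
    have hA : ∑ j ∈ Finset.range (N+1), f j = (∑ j ∈ Finset.range j0, f j) + f j0 := by
      rw [← Finset.sum_range_succ]
      symm
      apply Finset.sum_subset (Finset.range_subset_range.mpr (by omega))
      intro x hx hnx
      exact hfz x (hbad x (by simp only [Finset.mem_range] at hnx; omega))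
    have hgood_lt : ∀ j, j < j0 → good (j+1) := fun j hj => hgood_le (j+1) (by omega)
    have hsum_le : (∑ j ∈ Finset.range j0, f j) ≤ ∑ j ∈ Finset.range j0, v j :=
      Finset.sum_le_sum (fun j hj => hL j (lt_trans (Finset.mem_range.mp hj) hj0N)
        (hgood_lt j (Finset.mem_range.mp hj)))
    have hsum_ge : (∑ j ∈ Finset.range j0, v j) ≤ ∑ j ∈ Finset.range j0, f (j+1) :=
      Finset.sum_le_sum (fun j hj => hU j (lt_trans (Finset.mem_range.mp hj) hj0N)
        (hgood_lt j (Finset.mem_range.mp hj)))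
    have e1 : (∑ j ∈ Finset.range (j0+1), f j) = (∑ j ∈ Finset.range j0, f (j+1)) + f 0 :=
      Finset.sum_range_succ' f j0
    have e2 : (∑ j ∈ Finset.range (j0+1), f j) = (∑ j ∈ Finset.range j0, f j) + f j0 :=
      Finset.sum_range_succ f j0
    rw [abs_le]
    constructor
    · linarith [hf0 0, hC j0 hj0N]
    · linarith [hf1 j0, hv0 j0]

lemma slab_estimate {m : ℕ} (hm : 2 ≤ m) (S : Set (Fin (n+1) → ℝ))
    (hS : S ⊆ Set.Icc 0 1) (hsc : StairConvex S) :
    |(∑ j ∈ Finset.range m, (volume (slice S ((j : ℝ)/((m:ℝ)-1)))).toReal)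
      - ((m:ℝ)-1) * (volume S).toReal| ≤ 1 := by
  classical
  set N : ℕ := m - 1 with hN
  have hmN : m = N + 1 := by omega
  set N' : ℝ := (m:ℝ) - 1 with hN'
  have hNR : (N : ℝ) = N' := by rw [hN', hmN]; push_cast; ring
  have hN'pos : (0:ℝ) < N' := by rw [← hNR]; exact_mod_cast Nat.pos_of_ne_zero (by omega)
  set t : ℕ → ℝ := fun j => (j:ℝ) / N' with htdef
  have ht_mono : ∀ {i j : ℕ}, i ≤ j → t i ≤ t j := by
    intro i j hij
    show (i:ℝ)/N' ≤ (j:ℝ)/N'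
    have : (i:ℝ) ≤ (j:ℝ) := by exact_mod_cast hij
    gcongr
  have htN : t N = 1 := by
    show (N : ℝ) / N' = 1
    rw [hNR]; field_simp
  have ht0 : t 0 = 0 := by show ((0:ℕ):ℝ)/N' = 0; simp
  have hvolIco : ∀ j : ℕ, volume (Set.Ico (t j) (t (j+1))) = ENNReal.ofReal (1/N') := by
    intro j
    rw [Real.volume_Ico]
    congr 1
    show ((j+1 : ℕ):ℝ)/N' - (j:ℝ)/N' = 1/N'
    push_cast
    field_simp
    ring
  -- the slabs
  set E : ℕ → Set (Fin (n+1) → ℝ) := fun j =>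
    if j < N then cyl Set.univ (Set.Ico (t j) (t (j+1)))
    else if j = N then cyl Set.univ {1} else ∅ with hE
  have hcylmeas : ∀ I : Set ℝ, MeasurableSet I →
      MeasurableSet (cyl (Set.univ : Set (Fin n → ℝ)) I) := by
    intro I hI
    have : cyl (Set.univ : Set (Fin n → ℝ)) I
        = (fun f : Fin (n+1) → ℝ => f (Fin.last n)) ⁻¹' I := by
      ext g; simp [cyl]
    rw [this]
    exact measurable_pi_apply _ hI
  have hEmeas : ∀ j, MeasurableSet (E j) := by
    intro j
    rw [hE]
    dsimp only
    split_ifs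
    · exact hcylmeas _ measurableSet_Ico
    · exact hcylmeas _ (measurableSet_singleton 1)
    · exact MeasurableSet.empty
  have hmemE : ∀ j (g : Fin (n+1) → ℝ), g ∈ E j →
      (j < N ∧ t j ≤ g (Fin.last n) ∧ g (Fin.last n) < t (j+1)) ∨
        (j = N ∧ g (Fin.last n) = 1) := by
    intro j g hg
    rw [hE] at hg
    dsimp only at hg
    split_ifs at hg with h1 h2
    · exact Or.inl ⟨h1, hg.1.1, hg.1.2⟩
    · exact Or.inr ⟨h2, hg.1⟩
    · exact absurd hg (Set.notMem_empty g)
  have hdisj : ∀ i j, i ≠ j → Disjoint (E i) (E j) := by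
    intro i j hij
    rw [Set.disjoint_left]
    intro g hgi hgj
    rcases hmemE i g hgi with ⟨hiN, hi1, hi2⟩ | ⟨hiN, hi1⟩ <;>
      rcases hmemE j g hgj with ⟨hjN, hj1, hj2⟩ | ⟨hjN, hj1⟩
    · rcases Nat.lt_or_ge i j with h | h
      · have := ht_mono (show i + 1 ≤ j from h)
        linarith
      · have hji : j < i := by omega
        have := ht_mono (show j + 1 ≤ i from hji)
        linarith
    · have := ht_mono (show i + 1 ≤ N from hiN)
      rw [htN] at this
      linarith
    · have := ht_mono (show j + 1 ≤ N from hjN)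
      rw [htN] at this
      linarith
    · omega
  have hcov : S ⊆ ⋃ j < N + 1, E j := by
    intro g hg
    have h0 : (0:ℝ) ≤ g (Fin.last n) := (hS hg).1 (Fin.last n)
    have h1 : g (Fin.last n) ≤ 1 := (hS hg).2 (Fin.last n)
    simp only [Set.mem_iUnion]
    rcases eq_or_lt_of_le h1 with heq | hlt
    · refine ⟨N, by omega, ?_⟩
      rw [hE]
      dsimp only
      rw [if_neg (lt_irrefl N), if_pos rfl]
      exact ⟨heq, trivial⟩
    · set u := g (Fin.last n) with hu
      set j := ⌊u * N'⌋₊ with hj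
      have hj1 : (j : ℝ) ≤ u * N' := Nat.floor_le (by positivity)
      have hj2 : u * N' < (j : ℝ) + 1 := Nat.lt_floor_add_one _
      have hjN : j < N := by
        have h3 : u * N' < N' := by nlinarith
        have : (j:ℝ) < (N:ℝ) := by rw [hNR]; linarith
        exact_mod_cast this
      refine ⟨j, by omega, ?_⟩
      rw [hE]
      dsimp only
      rw [if_pos hjN]
      refine ⟨⟨?_, ?_⟩, trivial⟩
      · show (j:ℝ)/N' ≤ u
        rw [div_le_iff₀ hN'pos]
        exact hj1
      · show u < ((j+1:ℕ):ℝ)/N'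
        rw [lt_div_iff₀ hN'pos]
        push_cast
        linarith
  have hdecomp := measure_partition volume E hEmeas hdisj (N+1) S hcov
  have htopz : volume (S ∩ E N) = 0 := by
    apply measure_mono_null (t := cyl (Set.Icc (0:Fin n → ℝ) 1) {1})
    · rintro g ⟨hgS, hgE⟩
      rw [hE] at hgE
      dsimp only at hgE
      rw [if_neg (lt_irrefl N), if_pos rfl] at hgE
      exact ⟨hgE.1, init_mem_Icc hS hgS⟩
    · rw [volume_cyl]
      simp
  have hdecomp' : volume S = ∑ j ∈ Finset.range N, volume (S ∩ E j) := by
    rw [hdecomp, Finset.sum_range_succ, htopz, add_zero]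
  have hfinSE : ∀ j, volume (S ∩ E j) ≠ ⊤ := by
    intro j
    exact ((measure_mono Set.inter_subset_left).trans (vol_le_one hS)).trans_lt
      ENNReal.one_lt_top |>.ne
  have hfinslice : ∀ r : ℝ, volume (slice S r) ≠ ⊤ := by
    intro r
    exact (vol_le_one (slice_subset_Icc hS r)).trans_lt ENNReal.one_lt_top |>.ne
  have hVsum : (volume S).toReal = ∑ j ∈ Finset.range N, (volume (S ∩ E j)).toReal := by
    rw [hdecomp']
    exact ENNReal.toReal_sum (fun j _ => hfinSE j)
  have hEjeq : ∀ j, j < N → E j = cyl Set.univ (Set.Ico (t j) (t (j+1))) := by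
    intro j hj
    rw [hE]
    dsimp only
    rw [if_pos hj]
  -- conversion of measure inequalities to real ones
  have hreal : ∀ (A : Set (Fin n → ℝ)) (j : ℕ),
      cyl A (Set.Ico (t j) (t (j+1))) ⊆ S ∩ E j →
        (volume A).toReal ≤ N' * (volume (S ∩ E j)).toReal := by
    intro A j hsub
    have hm' := measure_mono (μ := (volume : MeasureTheory.Measure (Fin (n+1) → ℝ))) hsub
    rw [volume_cyl, hvolIco j] at hm'
    have h2 := ENNReal.toReal_mono (hfinSE j) hm'
    rw [ENNReal.toReal_mul, ENNReal.toReal_ofReal (by positivity)] at h2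
    have h3 : (volume A).toReal = N' * (1/N' * (volume A).toReal) := by
      field_simp
    rw [h3]
    exact mul_le_mul_of_nonneg_left h2 hN'pos.le
  have hreal' : ∀ (A : Set (Fin n → ℝ)) (j : ℕ), volume A ≠ ⊤ →
      S ∩ E j ⊆ cyl A (Set.Ico (t j) (t (j+1))) →
        N' * (volume (S ∩ E j)).toReal ≤ (volume A).toReal := by
    intro A j hfinA hsub
    have hm' := measure_mono (μ := (volume : MeasureTheory.Measure (Fin (n+1) → ℝ))) hsub
    rw [volume_cyl, hvolIco j] at hm'
    have h2 := ENNReal.toReal_mono (by exact ENNReal.mul_ne_top ENNReal.ofReal_ne_top hfinA) hm'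
    rw [ENNReal.toReal_mul, ENNReal.toReal_ofReal (by positivity)] at h2
    calc N' * (volume (S ∩ E j)).toReal ≤ N' * (1/N' * (volume A).toReal) :=
          mul_le_mul_of_nonneg_left h2 hN'pos.le
    _ = (volume A).toReal := by field_simp
  -- now apply the abstract estimate
  rw [hmN]
  have hgoal := sum_estimate N (fun j => (volume (slice S (t j))).toReal)
    (fun j => N' * (volume (S ∩ E j)).toReal) (N' * (volume S).toReal)
    (fun j => ∃ p ∈ S, t j ≤ p (Fin.last n))
    (fun j => ENNReal.toReal_nonneg)
    (fun j => by
      have h := ENNReal.toReal_mono ENNReal.one_ne_top (vol_le_one (slice_subset_Icc hS (t j)))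
      simpa using h)
    (fun j => mul_nonneg hN'pos.le ENNReal.toReal_nonneg)
    (by rw [hVsum, Finset.mul_sum])
    (fun i j hij ⟨p, hp, hle⟩ => ⟨p, hp, le_trans (ht_mono hij) hle⟩)
    ?hL ?hU ?hC ?hfz ?hvz ?h0
  case hL =>
    rintro j hj ⟨p, hp, hple⟩
    apply hreal
    rintro g ⟨hglast, hginit⟩
    have hg1 : Fin.snoc (Fin.init g) (t j) ∈ S := hginit
    have hg2 : Fin.snoc (Fin.init g) (g (Fin.last n)) ∈ S :=
      lift_mem hsc hg1 hp hglast.1 (le_trans (le_of_lt hglast.2) hple)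
    rw [Fin.snoc_init_self] at hg2
    exact ⟨hg2, by rw [hEjeq j hj]; exact ⟨hglast, trivial⟩⟩
  case hU =>
    rintro j hj ⟨p, hp, hple⟩
    apply hreal' _ _ (hfinslice _)
    rintro g ⟨hgS, hgE⟩
    rw [hEjeq j hj] at hgE
    obtain ⟨hglast, -⟩ := hgE
    have hg1 : Fin.snoc (Fin.init g) (g (Fin.last n)) ∈ S := by
      rw [Fin.snoc_init_self]; exact hgS
    have hg2 : Fin.snoc (Fin.init g) (t (j+1)) ∈ S :=
      lift_mem hsc hg1 hp (le_of_lt hglast.2) hple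
    exact ⟨hglast, hg2⟩
  case hC =>
    intro j hj
    have hsub : S ∩ E j ⊆ cyl (Set.Icc (0:Fin n → ℝ) 1) (Set.Ico (t j) (t (j+1))) := by
      rintro g ⟨hgS, hgE⟩
      rw [hEjeq j hj] at hgE
      exact ⟨hgE.1, init_mem_Icc hS hgS⟩
    have := hreal' _ j (by rw [vol_Icc_one]; exact ENNReal.one_ne_top) hsub
    rwa [vol_Icc_one, ENNReal.toReal_one] at this
  case hfz =>
    intro j hb
    have : slice S (t j) = ∅ := by
      ext x
      simp only [Set.mem_empty_iff_false, iff_false]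
      intro hx
      refine hb ⟨Fin.snoc x (t j), hx, ?_⟩
      rw [Fin.snoc_last]
    show (volume (slice S (t j))).toReal = 0
    rw [this]
    simp
  case hvz =>
    intro j hj hb
    have : S ∩ E j = ∅ := by
      ext g
      simp only [Set.mem_empty_iff_false, iff_false]
      rintro ⟨hgS, hgE⟩
      rw [hEjeq j hj] at hgE
      exact hb ⟨g, hgS, hgE.1.1⟩
    show N' * (volume (S ∩ E j)).toReal = 0
    rw [this]
    simp
  case h0 =>
    rcases Set.eq_empty_or_nonempty S with rfl | ⟨p, hp⟩
    · right
      constructor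
      · intro j
        have : slice (∅ : Set (Fin (n+1) → ℝ)) (t j) = ∅ := by
          ext x; simp [slice]
        show (volume (slice (∅ : Set (Fin (n+1) → ℝ)) (t j))).toReal = 0
        rw [this]
        simp
      · show N' * (volume (∅ : Set (Fin (n+1) → ℝ))).toReal = 0
        simp
    · left
      refine ⟨p, hp, ?_⟩
      rw [ht0]
      exact (hS hp).1 (Fin.last n)
  exact hgoal


open Classical in
lemma count_split {m : ℕ} (hm : 2 ≤ m) (S : Set (Fin (n+1) → ℝ)) :
    (((uniformGrid (n+1) m).filter (fun p => p ∈ S)).card : ℝ)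
      = ∑ j ∈ Finset.range m,
          (((uniformGrid n m).filter
            (fun x => x ∈ slice S ((j : ℝ)/((m:ℝ)-1)))).card : ℝ) := by
  have hm1 : (m:ℝ) - 1 ≠ 0 := by
    have : (1:ℝ) ≤ (m:ℝ) - 1 := by
      have : (2:ℝ) ≤ (m:ℝ) := by exact_mod_cast hm
      linarith
    linarith
  have hinj : ∀ d : ℕ, Function.Injective
      (fun (f : Fin d → Fin m) (i : Fin d) => (f i : ℝ) / ((m:ℝ) - 1)) := by
    intro d f g hfg
    funext i
    have := congrFun hfg i
    simp only [] at this
    field_simp at this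
    have h3 : (f i : ℕ) = (g i : ℕ) := by exact_mod_cast this
    exact Fin.ext h3
  have hcard : ∀ (d : ℕ) (P : (Fin d → ℝ) → Prop),
      ((uniformGrid d m).filter (fun p => P p)).card
        = (Finset.univ.filter
            (fun f : Fin d → Fin m => P (fun i => (f i : ℝ) / ((m:ℝ)-1)))).card := by
    intro d P
    rw [uniformGrid, Finset.filter_image, Finset.card_image_of_injective _ (hinj d)]
  rw [hcard (n+1) (fun p => p ∈ S)]
  have hsnoc : ∀ (g : Fin n → Fin m) (j : Fin m),
      (fun i => ((Fin.snoc g j : Fin (n+1) → Fin m) i : ℝ) / ((m:ℝ)-1))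
        = Fin.snoc (fun i => (g i : ℝ) / ((m:ℝ)-1)) ((j : ℝ)/((m:ℝ)-1)) := by
    intro g j
    funext i
    refine Fin.lastCases ?_ (fun i => ?_) i
    · simp [Fin.snoc_last]
    · simp [Fin.snoc_castSucc]
  have key : (Finset.univ.filter
      (fun f : Fin (n+1) → Fin m => (fun i => ((f i : ℕ) : ℝ) / ((m:ℝ)-1)) ∈ S)).card
      = ∑ j : Fin m, (Finset.univ.filter
          (fun g : Fin n → Fin m =>
            (fun i => ((g i : ℕ) : ℝ) / ((m:ℝ)-1)) ∈ slice S ((j : ℝ)/((m:ℝ)-1)))).card := by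
    rw [Finset.card_filter]
    rw [← Equiv.sum_comp (Fin.snocEquiv (fun _ => Fin m))
      (fun f : Fin (n+1) → Fin m => if (fun i => ((f i : ℕ) : ℝ) / ((m:ℝ)-1)) ∈ S then 1 else 0)]
    rw [Fintype.sum_prod_type]
    apply Finset.sum_congr rfl
    intro j _
    rw [Finset.card_filter]
    apply Finset.sum_congr rfl
    intro g _
    congr 1
    simp only [Fin.snocEquiv, Equiv.coe_fn_mk]
    rw [show (fun i => (((Fin.snoc g j : Fin (n+1) → Fin m) i : ℕ) : ℝ) / ((m:ℝ)-1))
      = Fin.snoc (fun i => ((g i : ℕ):ℝ) / ((m:ℝ)-1)) ((j : ℝ)/((m:ℝ)-1)) from hsnoc g j]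
    rfl
  rw [key]
  rw [Fin.sum_univ_eq_sum_range
    (fun j => (Finset.univ.filter
      (fun g : Fin n → Fin m =>
        (fun i => ((g i : ℕ) : ℝ) / ((m:ℝ)-1)) ∈ slice S ((j : ℝ)/((m:ℝ)-1)))).card)]
  push_cast
  apply Finset.sum_congr rfl
  intro j _
  rw [hcard n (fun x => x ∈ slice S ((j : ℝ)/((m:ℝ)-1)))]


lemma final_combine (m n : ℕ) (hm : 2 ≤ m) (c f : ℕ → ℝ) (V : ℝ)
    (hIH : ∀ j ∈ Finset.range m, |c j - ((m:ℝ)-1)^n * f j| ≤ (n:ℝ) * (m:ℝ)^(n-1))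
    (hslab : |(∑ j ∈ Finset.range m, f j) - ((m:ℝ)-1) * V| ≤ 1) :
    |(∑ j ∈ Finset.range m, c j) - ((m:ℝ)-1)^(n+1) * V| ≤ ((n:ℝ)+1) * (m:ℝ)^n := by
  have hm2 : (2:ℝ) ≤ (m:ℝ) := by exact_mod_cast hm
  have h1 : (∑ j ∈ Finset.range m, c j) - ((m:ℝ)-1)^(n+1) * V
      = (∑ j ∈ Finset.range m, (c j - ((m:ℝ)-1)^n * f j))
        + ((m:ℝ)-1)^n * ((∑ j ∈ Finset.range m, f j) - ((m:ℝ)-1) * V) := by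
    rw [Finset.sum_sub_distrib, ← Finset.mul_sum]
    ring
  rw [h1]
  have h2 : |(∑ j ∈ Finset.range m, (c j - ((m:ℝ)-1)^n * f j))|
      ≤ (m:ℝ) * ((n:ℝ) * (m:ℝ)^(n-1)) := by
    calc |(∑ j ∈ Finset.range m, (c j - ((m:ℝ)-1)^n * f j))|
        ≤ ∑ j ∈ Finset.range m, |c j - ((m:ℝ)-1)^n * f j| :=
          Finset.abs_sum_le_sum_abs _ _
    _ ≤ ∑ j ∈ Finset.range m, (n:ℝ) * (m:ℝ)^(n-1) := Finset.sum_le_sum hIH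
    _ = (m:ℝ) * ((n:ℝ) * (m:ℝ)^(n-1)) := by
        rw [Finset.sum_const, Finset.card_range, nsmul_eq_mul]
  have h3 : |((m:ℝ)-1)^n * ((∑ j ∈ Finset.range m, f j) - ((m:ℝ)-1) * V)|
      ≤ ((m:ℝ)-1)^n := by
    rw [abs_mul, abs_of_nonneg (pow_nonneg (by linarith) n)]
    calc ((m:ℝ)-1)^n * |(∑ j ∈ Finset.range m, f j) - ((m:ℝ)-1) * V|
        ≤ ((m:ℝ)-1)^n * 1 := by
          apply mul_le_mul_of_nonneg_left hslab (pow_nonneg (by linarith) n)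
    _ = ((m:ℝ)-1)^n := mul_one _
  have h4 := (abs_add_le _ _).trans (add_le_add h2 h3)
  refine h4.trans ?_
  rcases n with _ | k
  · norm_num
  · have hk : (k + 1) - 1 = k := rfl
    rw [hk]
    have hmk : (m:ℝ) * (((k:ℝ)+1) * (m:ℝ)^k) = ((k:ℝ)+1) * (m:ℝ)^(k+1) := by
      rw [pow_succ]; ring
    have hNm : ((m:ℝ)-1)^(k+1) ≤ (m:ℝ)^(k+1) :=
      pow_le_pow_left₀ (by linarith) (by linarith) _
    push_cast
    push_cast at hmk
    linarith

open Classical in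
lemma aux_main : ∀ (d m : ℕ), 2 ≤ m → ∀ (S : Set (Fin d → ℝ)), S ⊆ Set.Icc 0 1 →
    StairConvex S →
    |(((uniformGrid d m).filter (fun p => p ∈ S)).card : ℝ)
      - ((m:ℝ)-1)^d * (volume S).toReal| ≤ (d:ℝ) * (m:ℝ)^(d-1) := by
  intro d
  induction d with
  | zero =>
    intro m hm S hS hsc
    have hIcc : Set.Icc (0 : Fin 0 → ℝ) 1 = Set.univ :=
      Set.eq_univ_iff_forall.mpr (fun x => ⟨fun i => i.elim0, fun i => i.elim0⟩)
    have hcard1 : (uniformGrid 0 m).card = 1 := by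
      rw [uniformGrid, Finset.univ_unique, Finset.image_singleton, Finset.card_singleton]
    by_cases hd0 : (default : Fin 0 → ℝ) ∈ S
    · have hSuniv : S = Set.univ :=
        Set.eq_univ_iff_forall.mpr (fun x => by rwa [Subsingleton.elim x default])
      have hvol : volume (S : Set (Fin 0 → ℝ)) = 1 := by
        rw [hSuniv, ← hIcc, vol_Icc_one]
      have hfilt : (uniformGrid 0 m).filter (fun p => p ∈ S) = uniformGrid 0 m := by
        apply Finset.filter_true_of_mem
        intro x _
        rw [hSuniv]
        exact Set.mem_univ x
      rw [hfilt, hcard1, hvol]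
      norm_num
    · have hSemp : S = ∅ :=
        Set.eq_empty_iff_forall_notMem.mpr
          (fun x hx => hd0 (by rwa [Subsingleton.elim (default : Fin 0 → ℝ) x]))
      have hfilt : (uniformGrid 0 m).filter (fun p => p ∈ S) = ∅ := by
        apply Finset.filter_false_of_mem
        intro x _
        rw [hSemp]
        exact Set.notMem_empty x
      rw [hfilt, hSemp]
      simp
  | succ n ih =>
    intro m hm S hS hsc
    rw [count_split hm S]
    have hstep := final_combine m n hm
      (fun j => (((uniformGrid n m).filter
        (fun x => x ∈ slice S ((j : ℝ)/((m:ℝ)-1)))).card : ℝ))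
      (fun j => (volume (slice S ((j : ℝ)/((m:ℝ)-1)))).toReal)
      ((volume S).toReal)
      (fun j _ => ih m hm (slice S ((j : ℝ)/((m:ℝ)-1)))
        (slice_subset_Icc hS _) (stairConvex_slice hsc _))
      (slab_estimate hm S hS hsc)
    have hcast : ((n+1 : ℕ) : ℝ) = (n:ℝ) + 1 := by push_cast; ring
    have hsub : (n + 1) - 1 = n := rfl
    rw [hcast, hsub]
    exact hstep

end StairProofAux

open Classical in
/-- Grid approximation: for a stair-convex `S ⊆ [0,1]^d`, the number `g_S` of points of
the uniform grid `Gu(m)` in `S` satisfies `|g_S - (m-1)^d·vol(S)| ≤ d·m^(d-1)`. -/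
theorem stairConvex_grid_approximation (d m : ℕ) (hd : 1 ≤ d) (hm : 2 ≤ m)
    (S : Set (Fin d → ℝ)) (hS : S ⊆ Set.Icc 0 1) (hsc : StairConvex S) :
    |(((uniformGrid d m).filter (fun p => p ∈ S)).card : ℝ) -
        ((m : ℝ) - 1) ^ d * (MeasureTheory.volume S).toReal| ≤
      (d : ℝ) * (m : ℝ) ^ (d - 1) := by
  exact StairProofAux.aux_main d m hm S hS hsc
end

section
/- Let x ≥ 0 be a real number with α(x) ≥ 4. Then α_{α(x)−3}(x) > A(α(x)−2). -/
/-- The Ackermann hierarchy: `ackH k n = A_{k+1}(n)`, i.e. `A_1(n) = 2n`,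
`A_k(0) = 1` and `A_k(n) = A_{k-1}(A_k(n-1))` for `k ≥ 2`, `n ≥ 1`. -/
def ackH : ℕ → ℕ → ℕ
  | 0, n => 2 * n
  | _ + 1, 0 => 1
  | k + 1, n + 1 => ackH k (ackH (k + 1) n)

/-- The Ackermann function `A(n) = A_n(3)` (for `n ≥ 1`). -/
def ackA (n : ℕ) : ℕ := ackH (n - 1) 3

/-- The inverse functions of the Ackermann hierarchy:
`alphaH k x = min {n : A_k(n) ≥ x}` (for `k ≥ 1`, real `x`). -/
noncomputable def alphaH (k : ℕ) (x : ℝ) : ℕ := sInf {n : ℕ | x ≤ ackH (k - 1) n}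

/-- The inverse Ackermann function `α(x) = min {n ≥ 1 : A(n) ≥ x}`. -/
noncomputable def alphaA (x : ℝ) : ℕ := sInf {n : ℕ | 1 ≤ n ∧ x ≤ ackA n}

lemma ackH_one (k : ℕ) : ackH k 1 = 2 := by
  induction k with
  | zero => simp [ackH]
  | succ k ih => simp only [ackH]; simpa using ih

lemma ackH_two (k : ℕ) : ackH k 2 = 4 := by
  induction k with
  | zero => simp [ackH]
  | succ k ih => rw [ackH, ackH_one, ih]

lemma ackH_succ_le : ∀ k m, 1 ≤ m → m + 1 ≤ ackH k m := by
  intro k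
  induction k with
  | zero => intro m hm; rw [ackH]; omega
  | succ k ih =>
    intro m hm
    induction m with
    | zero => omega
    | succ m ihm =>
      rw [ackH]
      rcases Nat.eq_zero_or_pos m with rfl | hm'
      · simp only [ackH, ackH_one]; omega
      · have h1 : m + 1 ≤ ackH (k+1) m := ihm hm'
        have h2 : ackH (k+1) m + 1 ≤ ackH k (ackH (k+1) m) := ih _ (by omega)
        omega

lemma ackH_pos : ∀ k n, 1 ≤ ackH (k+1) n := by
  intro k n
  induction n with
  | zero => simp [ackH]
  | succ n ih =>
    rw [ackH]
    have := ackH_succ_le k (ackH (k+1) n) ih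
    omega

lemma ackH_mono (k : ℕ) : Monotone (ackH k) := by
  apply monotone_nat_of_le_succ
  intro n
  cases k with
  | zero => rw [ackH, ackH]; omega
  | succ k =>
    simp only [ackH]
    have h1 := ackH_pos k n
    have h2 := ackH_succ_le k (ackH (k+1) n) h1
    omega

/-- For `x` with `α(x) ≥ 4` one has `α_{α(x)-3}(x) > A(α(x)-2)`. -/
theorem alpha_sub_three_gt_ack (x : ℝ) (hx : 0 ≤ x) (h : 4 ≤ alphaA x) :
    ackA (alphaA x - 2) < alphaH (alphaA x - 3) x := by
  set m := alphaA x with hm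
  obtain ⟨j, hj⟩ : ∃ j, m = j + 4 := ⟨m - 4, by omega⟩
  have hlt : m - 1 < alphaA x := by omega
  rw [alphaA] at hlt
  have hnot : m - 1 ∉ {n : ℕ | 1 ≤ n ∧ x ≤ ackA n} := Nat.notMem_of_lt_sInf hlt
  have hkey : (ackH (j+2) 3 : ℝ) < x := by
    have h1 : ¬ (1 ≤ m - 1 ∧ x ≤ (ackA (m-1) : ℝ)) := hnot
    have h2 : ackA (m-1) = ackH (j+2) 3 := by
      rw [ackA, hj]; congr 1
    push_neg at h1
    have := h1 (by omega)
    rwa [h2] at this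
  have hcalc : ackH (j+2) 3 = ackH j (ackH (j+1) 3) := by
    rw [show (3:ℕ) = 2 + 1 from rfl, ackH, ackH_two]
    rw [show (4:ℕ) = 3 + 1 from rfl, ackH]
  have hS : alphaH (m - 3) x = sInf {n : ℕ | x ≤ ackH j n} := by
    have hj3 : m - 3 - 1 = j := by omega
    rw [alphaH, hj3]
  have hA2 : ackA (m - 2) = ackH (j+1) 3 := by
    have hj2 : m - 2 - 1 = j + 1 := by omega
    rw [ackA, hj2]
  rw [hS, hA2]
  set S : Set ℕ := {n : ℕ | x ≤ ackH j n} with hSdef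
  have hne : S.Nonempty := by
    refine ⟨max 1 ⌈x⌉₊, ?_⟩
    have h1 : x ≤ (max 1 ⌈x⌉₊ : ℕ) := by
      calc x ≤ (⌈x⌉₊ : ℝ) := Nat.le_ceil x
        _ ≤ ((max 1 ⌈x⌉₊ : ℕ) : ℝ) := by exact_mod_cast Nat.le_max_right 1 ⌈x⌉₊
    have h2 : (max 1 ⌈x⌉₊ : ℕ) ≤ ackH j (max 1 ⌈x⌉₊) := by
      have := ackH_succ_le j (max 1 ⌈x⌉₊) (Nat.le_max_left 1 _)
      omega
    exact h1.trans (by exact_mod_cast h2)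
  have hmem : sInf S ∈ S := Nat.sInf_mem hne
  by_contra hcon
  push_neg at hcon
  have hle : ackH j (sInf S) ≤ ackH j (ackH (j+1) 3) := ackH_mono j hcon
  have hfin : x ≤ (ackH (j+2) 3 : ℝ) := by
    calc x ≤ (ackH j (sInf S) : ℝ) := hmem
      _ ≤ (ackH j (ackH (j+1) 3) : ℝ) := by exact_mod_cast hle
      _ = (ackH (j+2) 3 : ℝ) := by rw [hcalc]
  linarith
end
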